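/- arXiv:1805.11336 — 5 statements merged into one kernel-verified Lean document; each statement's English description precedes it below -/
import Mathlib

section
/- Let V be a 4-dimensional vector space over k and let W ⊆ ⋀²V be a 2-dimensional subspace. Assume there exists a nonzero ω₀ ∈ W with ω₀ ∧ ω₀ = 0 such that every ω ∈ W satisfying ω ∧ ω = 0 is a scalar multiple of ω₀ (i.e., the projective line ℙ(W) is tangent to the Plücker quadric of decomposable 2-vectors). Then there exists a basis v₀, v₁, v₂, v₃ of V such that v₀ ∧ v₁ and v₀ ∧ v₃ + v₁ ∧ v₂ form a basis of W. -/
section Aux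

open ExteriorAlgebra
open Module

variable {k : Type*} [Field k] {V : Type*} [AddCommGroup V] [Module k V]

theorem ι_swap (a b : V) : ι k a * ι k b = -(ι k b * ι k a) :=
  eq_neg_of_add_eq_zero_left (ι_add_mul_swap a b)

variable {k : Type*} [Field k] {V : Type*} [AddCommGroup V] [Module k V]

theorem succ23 : Fin.succ (2:Fin 3) = (3:Fin 4) := rfl

theorem sab223 : (2:Fin 4).succAbove 2 = 3 := by decide

noncomputable def Emax (e : Basis (Fin 4) k V) : ExteriorAlgebra k V :=
  ι k (e 0) * ι k (e 1) * (ι k (e 2) * ι k (e 3))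


noncomputable def f4 (e : Basis (Fin 4) k V) : ∀ i, V [⋀^Fin i]→ₗ[k] k
  | 4 => e.det
  | _ => 0

theorem E_ne_zero (e : Basis (Fin 4) k V) : Emax e ≠ 0 := by
  intro h
  have h2 : ιMulti k 4 (e ·) = ι k (e 0) * ι k (e 1) * (ι k (e 2) * ι k (e 3)) := by
    rw [ιMulti_apply]
    simp [List.ofFn_succ, mul_assoc]
  have h3 := liftAlternating_apply_ιMulti (f4 e) (fun i : Fin 4 => e i)
  rw [h2, show ι k (e 0) * ι k (e 1) * (ι k (e 2) * ι k (e 3)) = Emax e from rfl, h] at h3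
  simp only [map_zero] at h3
  have h4 : f4 e 4 (fun i : Fin 4 => e i) = e.det e := rfl
  rw [h4, Basis.det_self] at h3
  exact one_ne_zero h3.symm

theorem smul_E_eq_zero (e : Basis (Fin 4) k V) (r : k) (h : r • Emax e = 0) : r = 0 := by
  rcases smul_eq_zero.1 h with h | h
  · exact h
  · exact absurd h (E_ne_zero e)

theorem quad (e : Basis (Fin 4) k V) (v : Fin 4 → V) :
    ι k (v 0) * ι k (v 1) * (ι k (v 2) * ι k (v 3)) =
      e.det v • (ι k (e 0) * ι k (e 1) * (ι k (e 2) * ι k (e 3))) := by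
  have key : (ιMulti k 4 : V [⋀^Fin 4]→ₗ[k] ExteriorAlgebra k V) =
      (LinearMap.toSpanSingleton k _ (ιMulti k 4 (e ·))).compAlternatingMap e.det := by
    refine Basis.ext_alternating e fun f hf => ?_
    have hbij : Function.Bijective f := (Finite.injective_iff_bijective.1 hf)
    let σ : Equiv.Perm (Fin 4) := Equiv.ofBijective f hbij
    have h1 : (fun i => e (f i)) = (e ∘ σ) := rfl
    rw [h1]
    rw [AlternatingMap.map_perm, LinearMap.compAlternatingMap_apply,
      AlternatingMap.map_perm, Basis.det_self]
    simp [LinearMap.toSpanSingleton_apply]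
  have h2 : ∀ w : Fin 4 → V, ιMulti k 4 w = ι k (w 0) * ι k (w 1) * (ι k (w 2) * ι k (w 3)) := by
    intro w
    rw [ιMulti_apply]
    simp [List.ofFn_succ, mul_assoc]
  have := congrArg (fun F : V [⋀^Fin 4]→ₗ[k] ExteriorAlgebra k V => F v) key
  simp only [LinearMap.compAlternatingMap_apply, LinearMap.toSpanSingleton_apply] at this
  rw [h2, h2] at this
  convert this using 3

theorem quad' (e : Basis (Fin 4) k V) (a b c d : V) :
    ι k a * ι k b * (ι k c * ι k d) = e.det ![a, b, c, d] • Emax e := by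
  have := quad e ![a, b, c, d]
  rw [Emax]
  simpa using this

theorem det_0101 (e : Basis (Fin 4) k V) : e.det ![e 0, e 1, e 0, e 1] = 0 := by
  rw [Basis.det_apply]
  simp [Basis.toMatrix, Matrix.det_succ_row_zero, Fin.sum_univ_succ, succ23, sab223, Finsupp.single_apply]

theorem det_0102 (e : Basis (Fin 4) k V) : e.det ![e 0, e 1, e 0, e 2] = 0 := by
  rw [Basis.det_apply]
  simp [Basis.toMatrix, Matrix.det_succ_row_zero, Fin.sum_univ_succ, succ23, sab223, Finsupp.single_apply]

theorem det_0103 (e : Basis (Fin 4) k V) : e.det ![e 0, e 1, e 0, e 3] = 0 := by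
  rw [Basis.det_apply]
  simp [Basis.toMatrix, Matrix.det_succ_row_zero, Fin.sum_univ_succ, succ23, sab223, Finsupp.single_apply]

theorem det_0112 (e : Basis (Fin 4) k V) : e.det ![e 0, e 1, e 1, e 2] = 0 := by
  rw [Basis.det_apply]
  simp [Basis.toMatrix, Matrix.det_succ_row_zero, Fin.sum_univ_succ, succ23, sab223, Finsupp.single_apply]

theorem det_0113 (e : Basis (Fin 4) k V) : e.det ![e 0, e 1, e 1, e 3] = 0 := by
  rw [Basis.det_apply]
  simp [Basis.toMatrix, Matrix.det_succ_row_zero, Fin.sum_univ_succ, succ23, sab223, Finsupp.single_apply]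

theorem det_0123 (e : Basis (Fin 4) k V) : e.det ![e 0, e 1, e 2, e 3] = 1 := by
  rw [Basis.det_apply]
  simp [Basis.toMatrix, Matrix.det_succ_row_zero, Fin.sum_univ_succ, succ23, sab223, Finsupp.single_apply]

theorem det_0201 (e : Basis (Fin 4) k V) : e.det ![e 0, e 2, e 0, e 1] = 0 := by
  rw [Basis.det_apply]
  simp [Basis.toMatrix, Matrix.det_succ_row_zero, Fin.sum_univ_succ, succ23, sab223, Finsupp.single_apply]

theorem det_0202 (e : Basis (Fin 4) k V) : e.det ![e 0, e 2, e 0, e 2] = 0 := by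
  rw [Basis.det_apply]
  simp [Basis.toMatrix, Matrix.det_succ_row_zero, Fin.sum_univ_succ, succ23, sab223, Finsupp.single_apply]

theorem det_0203 (e : Basis (Fin 4) k V) : e.det ![e 0, e 2, e 0, e 3] = 0 := by
  rw [Basis.det_apply]
  simp [Basis.toMatrix, Matrix.det_succ_row_zero, Fin.sum_univ_succ, succ23, sab223, Finsupp.single_apply]

theorem det_0212 (e : Basis (Fin 4) k V) : e.det ![e 0, e 2, e 1, e 2] = 0 := by
  rw [Basis.det_apply]
  simp [Basis.toMatrix, Matrix.det_succ_row_zero, Fin.sum_univ_succ, succ23, sab223, Finsupp.single_apply]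

theorem det_0213 (e : Basis (Fin 4) k V) : e.det ![e 0, e 2, e 1, e 3] = -1 := by
  rw [Basis.det_apply]
  simp [Basis.toMatrix, Matrix.det_succ_row_zero, Fin.sum_univ_succ, succ23, sab223, Finsupp.single_apply]

theorem det_0223 (e : Basis (Fin 4) k V) : e.det ![e 0, e 2, e 2, e 3] = 0 := by
  rw [Basis.det_apply]
  simp [Basis.toMatrix, Matrix.det_succ_row_zero, Fin.sum_univ_succ, succ23, sab223, Finsupp.single_apply]

theorem det_0301 (e : Basis (Fin 4) k V) : e.det ![e 0, e 3, e 0, e 1] = 0 := by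
  rw [Basis.det_apply]
  simp [Basis.toMatrix, Matrix.det_succ_row_zero, Fin.sum_univ_succ, succ23, sab223, Finsupp.single_apply]

theorem det_0302 (e : Basis (Fin 4) k V) : e.det ![e 0, e 3, e 0, e 2] = 0 := by
  rw [Basis.det_apply]
  simp [Basis.toMatrix, Matrix.det_succ_row_zero, Fin.sum_univ_succ, succ23, sab223, Finsupp.single_apply]

theorem det_0303 (e : Basis (Fin 4) k V) : e.det ![e 0, e 3, e 0, e 3] = 0 := by
  rw [Basis.det_apply]
  simp [Basis.toMatrix, Matrix.det_succ_row_zero, Fin.sum_univ_succ, succ23, sab223, Finsupp.single_apply]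

theorem det_0312 (e : Basis (Fin 4) k V) : e.det ![e 0, e 3, e 1, e 2] = 1 := by
  rw [Basis.det_apply]
  simp [Basis.toMatrix, Matrix.det_succ_row_zero, Fin.sum_univ_succ, succ23, sab223, Finsupp.single_apply]

theorem det_0313 (e : Basis (Fin 4) k V) : e.det ![e 0, e 3, e 1, e 3] = 0 := by
  rw [Basis.det_apply]
  simp [Basis.toMatrix, Matrix.det_succ_row_zero, Fin.sum_univ_succ, succ23, sab223, Finsupp.single_apply]

theorem det_0323 (e : Basis (Fin 4) k V) : e.det ![e 0, e 3, e 2, e 3] = 0 := by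
  rw [Basis.det_apply]
  simp [Basis.toMatrix, Matrix.det_succ_row_zero, Fin.sum_univ_succ, succ23, sab223, Finsupp.single_apply]

theorem det_1201 (e : Basis (Fin 4) k V) : e.det ![e 1, e 2, e 0, e 1] = 0 := by
  rw [Basis.det_apply]
  simp [Basis.toMatrix, Matrix.det_succ_row_zero, Fin.sum_univ_succ, succ23, sab223, Finsupp.single_apply]

theorem det_1202 (e : Basis (Fin 4) k V) : e.det ![e 1, e 2, e 0, e 2] = 0 := by
  rw [Basis.det_apply]
  simp [Basis.toMatrix, Matrix.det_succ_row_zero, Fin.sum_univ_succ, succ23, sab223, Finsupp.single_apply]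

theorem det_1203 (e : Basis (Fin 4) k V) : e.det ![e 1, e 2, e 0, e 3] = 1 := by
  rw [Basis.det_apply]
  simp [Basis.toMatrix, Matrix.det_succ_row_zero, Fin.sum_univ_succ, succ23, sab223, Finsupp.single_apply]

theorem det_1212 (e : Basis (Fin 4) k V) : e.det ![e 1, e 2, e 1, e 2] = 0 := by
  rw [Basis.det_apply]
  simp [Basis.toMatrix, Matrix.det_succ_row_zero, Fin.sum_univ_succ, succ23, sab223, Finsupp.single_apply]

theorem det_1213 (e : Basis (Fin 4) k V) : e.det ![e 1, e 2, e 1, e 3] = 0 := by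
  rw [Basis.det_apply]
  simp [Basis.toMatrix, Matrix.det_succ_row_zero, Fin.sum_univ_succ, succ23, sab223, Finsupp.single_apply]

theorem det_1223 (e : Basis (Fin 4) k V) : e.det ![e 1, e 2, e 2, e 3] = 0 := by
  rw [Basis.det_apply]
  simp [Basis.toMatrix, Matrix.det_succ_row_zero, Fin.sum_univ_succ, succ23, sab223, Finsupp.single_apply]

theorem det_1301 (e : Basis (Fin 4) k V) : e.det ![e 1, e 3, e 0, e 1] = 0 := by
  rw [Basis.det_apply]
  simp [Basis.toMatrix, Matrix.det_succ_row_zero, Fin.sum_univ_succ, succ23, sab223, Finsupp.single_apply]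

theorem det_1302 (e : Basis (Fin 4) k V) : e.det ![e 1, e 3, e 0, e 2] = -1 := by
  rw [Basis.det_apply]
  simp [Basis.toMatrix, Matrix.det_succ_row_zero, Fin.sum_univ_succ, succ23, sab223, Finsupp.single_apply]

theorem det_1303 (e : Basis (Fin 4) k V) : e.det ![e 1, e 3, e 0, e 3] = 0 := by
  rw [Basis.det_apply]
  simp [Basis.toMatrix, Matrix.det_succ_row_zero, Fin.sum_univ_succ, succ23, sab223, Finsupp.single_apply]

theorem det_1312 (e : Basis (Fin 4) k V) : e.det ![e 1, e 3, e 1, e 2] = 0 := by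
  rw [Basis.det_apply]
  simp [Basis.toMatrix, Matrix.det_succ_row_zero, Fin.sum_univ_succ, succ23, sab223, Finsupp.single_apply]

theorem det_1313 (e : Basis (Fin 4) k V) : e.det ![e 1, e 3, e 1, e 3] = 0 := by
  rw [Basis.det_apply]
  simp [Basis.toMatrix, Matrix.det_succ_row_zero, Fin.sum_univ_succ, succ23, sab223, Finsupp.single_apply]

theorem det_1323 (e : Basis (Fin 4) k V) : e.det ![e 1, e 3, e 2, e 3] = 0 := by
  rw [Basis.det_apply]
  simp [Basis.toMatrix, Matrix.det_succ_row_zero, Fin.sum_univ_succ, succ23, sab223, Finsupp.single_apply]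

theorem det_2301 (e : Basis (Fin 4) k V) : e.det ![e 2, e 3, e 0, e 1] = 1 := by
  rw [Basis.det_apply]
  simp [Basis.toMatrix, Matrix.det_succ_row_zero, Fin.sum_univ_succ, succ23, sab223, Finsupp.single_apply]

theorem det_2302 (e : Basis (Fin 4) k V) : e.det ![e 2, e 3, e 0, e 2] = 0 := by
  rw [Basis.det_apply]
  simp [Basis.toMatrix, Matrix.det_succ_row_zero, Fin.sum_univ_succ, succ23, sab223, Finsupp.single_apply]

theorem det_2303 (e : Basis (Fin 4) k V) : e.det ![e 2, e 3, e 0, e 3] = 0 := by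
  rw [Basis.det_apply]
  simp [Basis.toMatrix, Matrix.det_succ_row_zero, Fin.sum_univ_succ, succ23, sab223, Finsupp.single_apply]

theorem det_2312 (e : Basis (Fin 4) k V) : e.det ![e 2, e 3, e 1, e 2] = 0 := by
  rw [Basis.det_apply]
  simp [Basis.toMatrix, Matrix.det_succ_row_zero, Fin.sum_univ_succ, succ23, sab223, Finsupp.single_apply]

theorem det_2313 (e : Basis (Fin 4) k V) : e.det ![e 2, e 3, e 1, e 3] = 0 := by
  rw [Basis.det_apply]
  simp [Basis.toMatrix, Matrix.det_succ_row_zero, Fin.sum_univ_succ, succ23, sab223, Finsupp.single_apply]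

theorem det_2323 (e : Basis (Fin 4) k V) : e.det ![e 2, e 3, e 2, e 3] = 0 := by
  rw [Basis.det_apply]
  simp [Basis.toMatrix, Matrix.det_succ_row_zero, Fin.sum_univ_succ, succ23, sab223, Finsupp.single_apply]

theorem mul_formula (e : Basis (Fin 4) k V) (a₁ b₁ c₁ d₁ f₁ g₁ a₂ b₂ c₂ d₂ f₂ g₂ : k) :
    (a₁ • (ι k (e 0) * ι k (e 1)) + b₁ • (ι k (e 0) * ι k (e 2)) +
        c₁ • (ι k (e 0) * ι k (e 3)) + d₁ • (ι k (e 1) * ι k (e 2)) +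
        f₁ • (ι k (e 1) * ι k (e 3)) + g₁ • (ι k (e 2) * ι k (e 3))) *
      (a₂ • (ι k (e 0) * ι k (e 1)) + b₂ • (ι k (e 0) * ι k (e 2)) +
        c₂ • (ι k (e 0) * ι k (e 3)) + d₂ • (ι k (e 1) * ι k (e 2)) +
        f₂ • (ι k (e 1) * ι k (e 3)) + g₂ • (ι k (e 2) * ι k (e 3))) =
      (a₁ * g₂ + g₁ * a₂ - b₁ * f₂ - f₁ * b₂ + c₁ * d₂ + d₁ * c₂) • Emax e := by
  simp only [add_mul, mul_add, smul_mul_assoc, mul_smul_comm, quad' e]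
  simp only [det_0101, det_0102, det_0103, det_0112, det_0113, det_0123, det_0201, det_0202, det_0203, det_0212, det_0213, det_0223, det_0301, det_0302, det_0303, det_0312, det_0313, det_0323, det_1201, det_1202, det_1203, det_1212, det_1213, det_1223, det_1301, det_1302, det_1303, det_1312, det_1313, det_1323, det_2301, det_2302, det_2303, det_2312, det_2313, det_2323, smul_smul, one_smul, neg_smul, zero_smul, smul_zero, smul_neg]
  module

theorem span_two (e : Basis (Fin 4) k V) (x : ExteriorAlgebra k V) (hx : x ∈ ⋀[k]^2 V) :
    ∃ a b c d f g : k,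
      x = a • (ι k (e 0) * ι k (e 1)) + b • (ι k (e 0) * ι k (e 2)) +
          c • (ι k (e 0) * ι k (e 3)) + d • (ι k (e 1) * ι k (e 2)) +
          f • (ι k (e 1) * ι k (e 3)) + g • (ι k (e 2) * ι k (e 3)) := by
  rw [show ⋀[k]^2 V = LinearMap.range (ι k (M := V)) * LinearMap.range (ι k (M := V)) from
    pow_two _] at hx
  refine Submodule.mul_induction_on hx ?_ ?_
  · rintro m ⟨v, rfl⟩ n ⟨w, rfl⟩
    have hv := e.sum_repr v
    have hw := e.sum_repr w
    rw [Fin.sum_univ_four] at hv hw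
    set r := e.repr v
    set s := e.repr w
    refine ⟨r 0 * s 1 - r 1 * s 0, r 0 * s 2 - r 2 * s 0, r 0 * s 3 - r 3 * s 0,
      r 1 * s 2 - r 2 * s 1, r 1 * s 3 - r 3 * s 1, r 2 * s 3 - r 3 * s 2, ?_⟩
    have s10 := ι_swap (k := k) (e 1) (e 0)
    have s20 := ι_swap (k := k) (e 2) (e 0)
    have s30 := ι_swap (k := k) (e 3) (e 0)
    have s21 := ι_swap (k := k) (e 2) (e 1)
    have s31 := ι_swap (k := k) (e 3) (e 1)
    have s32 := ι_swap (k := k) (e 3) (e 2)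
    have z0 := ι_sq_zero (R := k) (e 0)
    have z1 := ι_sq_zero (R := k) (e 1)
    have z2 := ι_sq_zero (R := k) (e 2)
    have z3 := ι_sq_zero (R := k) (e 3)
    rw [← hv, ← hw]
    simp only [map_add, map_smul, add_mul, mul_add, smul_mul_assoc, mul_smul_comm,
      s10, s20, s30, s21, s31, s32, z0, z1, z2, z3]
    module
  · rintro x y ihx ihy
    obtain ⟨a, b, c, d, f, g, rfl⟩ := ihx
    obtain ⟨a', b', c', d', f', g', rfl⟩ := ihy
    exact ⟨a + a', b + b', c + c', d + d', f + f', g + g', by module⟩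

theorem case_a (e : Basis (Fin 4) k V) (a b c d f g : k)
    (hpl : a * g - b * f + c * d = 0) (hx : a ≠ 0) :
    ∃ b' : Basis (Fin 4) k V,
      a • (ι k (e 0) * ι k (e 1)) + b • (ι k (e 0) * ι k (e 2)) +
          c • (ι k (e 0) * ι k (e 3)) + d • (ι k (e 1) * ι k (e 2)) +
          f • (ι k (e 1) * ι k (e 3)) + g • (ι k (e 2) * ι k (e 3)) =
        ι k (b' 0) * ι k (b' 1) := by
  set A : V := e 0 + (-(d/a)) • e 2 + (-(f/a)) • e 3 with hA
  set B : V := a • e 1 + b • e 2 + c • e 3 with hB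
  have hdet : IsUnit (e.det ![A, B, e 2, e 3]) := by
    rw [Basis.det_apply]
    have hd : Basis.toMatrix e ![A, B, e 2, e 3] = Matrix.of ![![1, 0, 0, 0], ![0, a, 0, 0], ![-(d/a), b, 1, 0], ![-(f/a), c, 0, 1]] := by
      ext i j
      fin_cases i <;> fin_cases j <;>
        simp [Basis.toMatrix, hA, hB, Finsupp.single_apply, Matrix.vecHead, Matrix.vecTail]
    rw [hd]
    simp [Matrix.det_succ_row_zero, Fin.sum_univ_succ, succ23, sab223, isUnit_iff_ne_zero, hx]
  have hsp := (Basis.is_basis_iff_det e).2 hdet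
  let b' : Basis (Fin 4) k V := Basis.mk hsp.1 hsp.2.ge
  refine ⟨b', ?_⟩
  have h0 : b' 0 = A := by simp [b', Basis.mk_apply]
  have h1 : b' 1 = B := by simp [b', Basis.mk_apply]
  rw [h0, h1, hA, hB]
  have s10 := ι_swap (k := k) (e 1) (e 0)
  have s20 := ι_swap (k := k) (e 2) (e 0)
  have s30 := ι_swap (k := k) (e 3) (e 0)
  have s21 := ι_swap (k := k) (e 2) (e 1)
  have s31 := ι_swap (k := k) (e 3) (e 1)
  have s32 := ι_swap (k := k) (e 3) (e 2)
  have z0 := ι_sq_zero (R := k) (e 0)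
  have z1 := ι_sq_zero (R := k) (e 1)
  have z2 := ι_sq_zero (R := k) (e 2)
  have z3 := ι_sq_zero (R := k) (e 3)
  simp only [map_add, map_smul, add_mul, mul_add, smul_mul_assoc, mul_smul_comm,
    s10, s20, s30, s21, s31, s32, z0, z1, z2, z3]
  have hsub : g = (b*f - c*d)/a := by
    field_simp
    first
      | linear_combination hpl
      | linear_combination -hpl
  match_scalars <;> (try simp only [hsub]) <;> field_simp <;> ring

theorem case_b (e : Basis (Fin 4) k V) (a b c d f g : k)
    (hpl : a * g - b * f + c * d = 0) (hx : b ≠ 0) :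
    ∃ b' : Basis (Fin 4) k V,
      a • (ι k (e 0) * ι k (e 1)) + b • (ι k (e 0) * ι k (e 2)) +
          c • (ι k (e 0) * ι k (e 3)) + d • (ι k (e 1) * ι k (e 2)) +
          f • (ι k (e 1) * ι k (e 3)) + g • (ι k (e 2) * ι k (e 3)) =
        ι k (b' 0) * ι k (b' 1) := by
  set A : V := e 0 + (d/b) • e 1 + (-(g/b)) • e 3 with hA
  set B : V := a • e 1 + b • e 2 + c • e 3 with hB
  have hdet : IsUnit (e.det ![A, B, e 1, e 3]) := by
    rw [Basis.det_apply]
    have hd : Basis.toMatrix e ![A, B, e 1, e 3] = Matrix.of ![![1, 0, 0, 0], ![d/b, a, 1, 0], ![0, b, 0, 0], ![-(g/b), c, 0, 1]] := by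
      ext i j
      fin_cases i <;> fin_cases j <;>
        simp [Basis.toMatrix, hA, hB, Finsupp.single_apply, Matrix.vecHead, Matrix.vecTail]
    rw [hd]
    simp [Matrix.det_succ_row_zero, Fin.sum_univ_succ, succ23, sab223, isUnit_iff_ne_zero, hx]
  have hsp := (Basis.is_basis_iff_det e).2 hdet
  let b' : Basis (Fin 4) k V := Basis.mk hsp.1 hsp.2.ge
  refine ⟨b', ?_⟩
  have h0 : b' 0 = A := by simp [b', Basis.mk_apply]
  have h1 : b' 1 = B := by simp [b', Basis.mk_apply]
  rw [h0, h1, hA, hB]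
  have s10 := ι_swap (k := k) (e 1) (e 0)
  have s20 := ι_swap (k := k) (e 2) (e 0)
  have s30 := ι_swap (k := k) (e 3) (e 0)
  have s21 := ι_swap (k := k) (e 2) (e 1)
  have s31 := ι_swap (k := k) (e 3) (e 1)
  have s32 := ι_swap (k := k) (e 3) (e 2)
  have z0 := ι_sq_zero (R := k) (e 0)
  have z1 := ι_sq_zero (R := k) (e 1)
  have z2 := ι_sq_zero (R := k) (e 2)
  have z3 := ι_sq_zero (R := k) (e 3)
  simp only [map_add, map_smul, add_mul, mul_add, smul_mul_assoc, mul_smul_comm,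
    s10, s20, s30, s21, s31, s32, z0, z1, z2, z3]
  have hsub : f = (a*g + c*d)/b := by
    field_simp
    first
      | linear_combination hpl
      | linear_combination -hpl
  match_scalars <;> (try simp only [hsub]) <;> field_simp <;> ring

theorem case_c (e : Basis (Fin 4) k V) (a b c d f g : k)
    (hpl : a * g - b * f + c * d = 0) (hx : c ≠ 0) :
    ∃ b' : Basis (Fin 4) k V,
      a • (ι k (e 0) * ι k (e 1)) + b • (ι k (e 0) * ι k (e 2)) +
          c • (ι k (e 0) * ι k (e 3)) + d • (ι k (e 1) * ι k (e 2)) +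
          f • (ι k (e 1) * ι k (e 3)) + g • (ι k (e 2) * ι k (e 3)) =
        ι k (b' 0) * ι k (b' 1) := by
  set A : V := e 0 + (f/c) • e 1 + (g/c) • e 2 with hA
  set B : V := a • e 1 + b • e 2 + c • e 3 with hB
  have hdet : IsUnit (e.det ![A, B, e 1, e 2]) := by
    rw [Basis.det_apply]
    have hd : Basis.toMatrix e ![A, B, e 1, e 2] = Matrix.of ![![1, 0, 0, 0], ![f/c, a, 1, 0], ![g/c, b, 0, 1], ![0, c, 0, 0]] := by
      ext i j
      fin_cases i <;> fin_cases j <;>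
        simp [Basis.toMatrix, hA, hB, Finsupp.single_apply, Matrix.vecHead, Matrix.vecTail]
    rw [hd]
    simp [Matrix.det_succ_row_zero, Fin.sum_univ_succ, succ23, sab223, isUnit_iff_ne_zero, hx]
  have hsp := (Basis.is_basis_iff_det e).2 hdet
  let b' : Basis (Fin 4) k V := Basis.mk hsp.1 hsp.2.ge
  refine ⟨b', ?_⟩
  have h0 : b' 0 = A := by simp [b', Basis.mk_apply]
  have h1 : b' 1 = B := by simp [b', Basis.mk_apply]
  rw [h0, h1, hA, hB]
  have s10 := ι_swap (k := k) (e 1) (e 0)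
  have s20 := ι_swap (k := k) (e 2) (e 0)
  have s30 := ι_swap (k := k) (e 3) (e 0)
  have s21 := ι_swap (k := k) (e 2) (e 1)
  have s31 := ι_swap (k := k) (e 3) (e 1)
  have s32 := ι_swap (k := k) (e 3) (e 2)
  have z0 := ι_sq_zero (R := k) (e 0)
  have z1 := ι_sq_zero (R := k) (e 1)
  have z2 := ι_sq_zero (R := k) (e 2)
  have z3 := ι_sq_zero (R := k) (e 3)
  simp only [map_add, map_smul, add_mul, mul_add, smul_mul_assoc, mul_smul_comm,
    s10, s20, s30, s21, s31, s32, z0, z1, z2, z3]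
  have hsub : d = (b*f - a*g)/c := by
    field_simp
    first
      | linear_combination hpl
      | linear_combination -hpl
  match_scalars <;> (try simp only [hsub]) <;> field_simp <;> ring

theorem case_d (e : Basis (Fin 4) k V) (a b c d f g : k)
    (hpl : a * g - b * f + c * d = 0) (hx : d ≠ 0) :
    ∃ b' : Basis (Fin 4) k V,
      a • (ι k (e 0) * ι k (e 1)) + b • (ι k (e 0) * ι k (e 2)) +
          c • (ι k (e 0) * ι k (e 3)) + d • (ι k (e 1) * ι k (e 2)) +
          f • (ι k (e 1) * ι k (e 3)) + g • (ι k (e 2) * ι k (e 3)) =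
        ι k (b' 0) * ι k (b' 1) := by
  set A : V := e 1 + (b/d) • e 0 + (-(g/d)) • e 3 with hA
  set B : V := (-a) • e 0 + d • e 2 + f • e 3 with hB
  have hdet : IsUnit (e.det ![A, B, e 0, e 3]) := by
    rw [Basis.det_apply]
    have hd : Basis.toMatrix e ![A, B, e 0, e 3] = Matrix.of ![![b/d, -a, 1, 0], ![1, 0, 0, 0], ![0, d, 0, 0], ![-(g/d), f, 0, 1]] := by
      ext i j
      fin_cases i <;> fin_cases j <;>
        simp [Basis.toMatrix, hA, hB, Finsupp.single_apply, Matrix.vecHead, Matrix.vecTail]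
    rw [hd]
    simp [Matrix.det_succ_row_zero, Fin.sum_univ_succ, succ23, sab223, isUnit_iff_ne_zero, hx]
  have hsp := (Basis.is_basis_iff_det e).2 hdet
  let b' : Basis (Fin 4) k V := Basis.mk hsp.1 hsp.2.ge
  refine ⟨b', ?_⟩
  have h0 : b' 0 = A := by simp [b', Basis.mk_apply]
  have h1 : b' 1 = B := by simp [b', Basis.mk_apply]
  rw [h0, h1, hA, hB]
  have s10 := ι_swap (k := k) (e 1) (e 0)
  have s20 := ι_swap (k := k) (e 2) (e 0)
  have s30 := ι_swap (k := k) (e 3) (e 0)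
  have s21 := ι_swap (k := k) (e 2) (e 1)
  have s31 := ι_swap (k := k) (e 3) (e 1)
  have s32 := ι_swap (k := k) (e 3) (e 2)
  have z0 := ι_sq_zero (R := k) (e 0)
  have z1 := ι_sq_zero (R := k) (e 1)
  have z2 := ι_sq_zero (R := k) (e 2)
  have z3 := ι_sq_zero (R := k) (e 3)
  simp only [map_add, map_smul, add_mul, mul_add, smul_mul_assoc, mul_smul_comm,
    s10, s20, s30, s21, s31, s32, z0, z1, z2, z3]
  have hsub : c = (b*f - a*g)/d := by
    field_simp
    first
      | linear_combination hpl
      | linear_combination -hpl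
  match_scalars <;> (try simp only [hsub]) <;> field_simp <;> ring

theorem case_f (e : Basis (Fin 4) k V) (a b c d f g : k)
    (hpl : a * g - b * f + c * d = 0) (hx : f ≠ 0) :
    ∃ b' : Basis (Fin 4) k V,
      a • (ι k (e 0) * ι k (e 1)) + b • (ι k (e 0) * ι k (e 2)) +
          c • (ι k (e 0) * ι k (e 3)) + d • (ι k (e 1) * ι k (e 2)) +
          f • (ι k (e 1) * ι k (e 3)) + g • (ι k (e 2) * ι k (e 3)) =
        ι k (b' 0) * ι k (b' 1) := by
  set A : V := e 1 + (c/f) • e 0 + (g/f) • e 2 with hA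
  set B : V := (-a) • e 0 + d • e 2 + f • e 3 with hB
  have hdet : IsUnit (e.det ![A, B, e 0, e 2]) := by
    rw [Basis.det_apply]
    have hd : Basis.toMatrix e ![A, B, e 0, e 2] = Matrix.of ![![c/f, -a, 1, 0], ![1, 0, 0, 0], ![g/f, d, 0, 1], ![0, f, 0, 0]] := by
      ext i j
      fin_cases i <;> fin_cases j <;>
        simp [Basis.toMatrix, hA, hB, Finsupp.single_apply, Matrix.vecHead, Matrix.vecTail]
    rw [hd]
    simp [Matrix.det_succ_row_zero, Fin.sum_univ_succ, succ23, sab223, isUnit_iff_ne_zero, hx]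
  have hsp := (Basis.is_basis_iff_det e).2 hdet
  let b' : Basis (Fin 4) k V := Basis.mk hsp.1 hsp.2.ge
  refine ⟨b', ?_⟩
  have h0 : b' 0 = A := by simp [b', Basis.mk_apply]
  have h1 : b' 1 = B := by simp [b', Basis.mk_apply]
  rw [h0, h1, hA, hB]
  have s10 := ι_swap (k := k) (e 1) (e 0)
  have s20 := ι_swap (k := k) (e 2) (e 0)
  have s30 := ι_swap (k := k) (e 3) (e 0)
  have s21 := ι_swap (k := k) (e 2) (e 1)
  have s31 := ι_swap (k := k) (e 3) (e 1)
  have s32 := ι_swap (k := k) (e 3) (e 2)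
  have z0 := ι_sq_zero (R := k) (e 0)
  have z1 := ι_sq_zero (R := k) (e 1)
  have z2 := ι_sq_zero (R := k) (e 2)
  have z3 := ι_sq_zero (R := k) (e 3)
  simp only [map_add, map_smul, add_mul, mul_add, smul_mul_assoc, mul_smul_comm,
    s10, s20, s30, s21, s31, s32, z0, z1, z2, z3]
  have hsub : b = (a*g + c*d)/f := by
    field_simp
    first
      | linear_combination hpl
      | linear_combination -hpl
  match_scalars <;> (try simp only [hsub]) <;> field_simp <;> ring

theorem case_g (e : Basis (Fin 4) k V) (a b c d f g : k)
    (hpl : a * g - b * f + c * d = 0) (hx : g ≠ 0) :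
    ∃ b' : Basis (Fin 4) k V,
      a • (ι k (e 0) * ι k (e 1)) + b • (ι k (e 0) * ι k (e 2)) +
          c • (ι k (e 0) * ι k (e 3)) + d • (ι k (e 1) * ι k (e 2)) +
          f • (ι k (e 1) * ι k (e 3)) + g • (ι k (e 2) * ι k (e 3)) =
        ι k (b' 0) * ι k (b' 1) := by
  set A : V := e 2 + (c/g) • e 0 + (f/g) • e 1 with hA
  set B : V := (-b) • e 0 + (-d) • e 1 + g • e 3 with hB
  have hdet : IsUnit (e.det ![A, B, e 0, e 1]) := by
    rw [Basis.det_apply]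
    have hd : Basis.toMatrix e ![A, B, e 0, e 1] = Matrix.of ![![c/g, -b, 1, 0], ![f/g, -d, 0, 1], ![1, 0, 0, 0], ![0, g, 0, 0]] := by
      ext i j
      fin_cases i <;> fin_cases j <;>
        simp [Basis.toMatrix, hA, hB, Finsupp.single_apply, Matrix.vecHead, Matrix.vecTail]
    rw [hd]
    simp [Matrix.det_succ_row_zero, Fin.sum_univ_succ, succ23, sab223, isUnit_iff_ne_zero, hx]
  have hsp := (Basis.is_basis_iff_det e).2 hdet
  let b' : Basis (Fin 4) k V := Basis.mk hsp.1 hsp.2.ge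
  refine ⟨b', ?_⟩
  have h0 : b' 0 = A := by simp [b', Basis.mk_apply]
  have h1 : b' 1 = B := by simp [b', Basis.mk_apply]
  rw [h0, h1, hA, hB]
  have s10 := ι_swap (k := k) (e 1) (e 0)
  have s20 := ι_swap (k := k) (e 2) (e 0)
  have s30 := ι_swap (k := k) (e 3) (e 0)
  have s21 := ι_swap (k := k) (e 2) (e 1)
  have s31 := ι_swap (k := k) (e 3) (e 1)
  have s32 := ι_swap (k := k) (e 3) (e 2)
  have z0 := ι_sq_zero (R := k) (e 0)
  have z1 := ι_sq_zero (R := k) (e 1)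
  have z2 := ι_sq_zero (R := k) (e 2)
  have z3 := ι_sq_zero (R := k) (e 3)
  simp only [map_add, map_smul, add_mul, mul_add, smul_mul_assoc, mul_smul_comm,
    s10, s20, s30, s21, s31, s32, z0, z1, z2, z3]
  have hsub : a = (b*f - c*d)/g := by
    field_simp
    first
      | linear_combination hpl
      | linear_combination -hpl
  match_scalars <;> (try simp only [hsub]) <;> field_simp <;> ring


theorem final_basis (p : Basis (Fin 4) k V) (b₂ c₂ d₂ f₂ : k)
    (hG : d₂ * c₂ - b₂ * f₂ ≠ 0) :
    ∃ q : Basis (Fin 4) k V, q 0 = p 0 ∧ q 1 = p 1 ∧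
      q 2 = d₂ • p 2 + f₂ • p 3 ∧ q 3 = b₂ • p 2 + c₂ • p 3 := by
  set v2 : V := d₂ • p 2 + f₂ • p 3 with hv2
  set v3 : V := b₂ • p 2 + c₂ • p 3 with hv3
  have hdet : IsUnit (p.det ![p 0, p 1, v2, v3]) := by
    rw [Basis.det_apply]
    have hd : Basis.toMatrix p ![p 0, p 1, v2, v3] =
        Matrix.of ![![1, 0, 0, 0], ![0, 1, 0, 0], ![0, 0, d₂, b₂], ![0, 0, f₂, c₂]] := by
      ext i j
      fin_cases i <;> fin_cases j <;>
        simp [Basis.toMatrix, hv2, hv3, Finsupp.single_apply, Matrix.vecHead, Matrix.vecTail]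
    rw [hd]
    simp [Matrix.det_succ_row_zero, Fin.sum_univ_succ, succ23, sab223, isUnit_iff_ne_zero]
    intro h
    exact hG (by linear_combination h)
  have hsp := (Basis.is_basis_iff_det p).2 hdet
  refine ⟨Basis.mk hsp.1 hsp.2.ge, ?_, ?_, ?_, ?_⟩ <;> simp [Basis.mk_apply]

theorem helper_span_mem {M : Type*} [AddCommGroup M] [Module k M] (x y : M) (s : k)
    (h : y = s • x) : y ∈ Submodule.span k {x} :=
  Submodule.mem_span_singleton.2 ⟨s, h.symm⟩

end Aux

/-- If the projective line `ℙ(W)` attached to a 2-dimensional subspace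
`W ⊆ ⋀²V` (with `V` of dimension 4) is tangent to the Plücker quadric of decomposable
2-vectors, i.e. there is a nonzero decomposable `ω₀ ∈ W` such that every decomposable
element of `W` is a scalar multiple of `ω₀`, then there is a basis `v₀, v₁, v₂, v₃` of `V`
such that `v₀ ∧ v₁` and `v₀ ∧ v₃ + v₁ ∧ v₂` form a basis of `W`. -/
theorem stmt_1 {k : Type*} [Field k] [IsAlgClosed k] [CharZero k]
    {V : Type*} [AddCommGroup V] [Module k V]
    (hV : Module.finrank k V = 4)
    (W : Submodule k (ExteriorAlgebra k V))
    (hW2 : W ≤ ⋀[k]^2 V)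
    (hWrank : Module.finrank k W = 2)
    (ω₀ : ExteriorAlgebra k V) (hω₀W : ω₀ ∈ W) (hω₀ : ω₀ ≠ 0) (h₀ : ω₀ * ω₀ = 0)
    (htang : ∀ ω ∈ W, ω * ω = 0 → ∃ c : k, ω = c • ω₀) :
    ∃ b : Module.Basis (Fin 4) k V,
      Submodule.span k {ExteriorAlgebra.ι k (b 0) * ExteriorAlgebra.ι k (b 1),
        ExteriorAlgebra.ι k (b 0) * ExteriorAlgebra.ι k (b 3) +
          ExteriorAlgebra.ι k (b 1) * ExteriorAlgebra.ι k (b 2)} = W ∧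
      LinearIndependent k ![ExteriorAlgebra.ι k (b 0) * ExteriorAlgebra.ι k (b 1),
        ExteriorAlgebra.ι k (b 0) * ExteriorAlgebra.ι k (b 3) +
          ExteriorAlgebra.ι k (b 1) * ExteriorAlgebra.ι k (b 2)] := by
  have hfin : FiniteDimensional k V := FiniteDimensional.of_finrank_pos (by rw [hV]; norm_num)
  let e : Module.Basis (Fin 4) k V := Module.finBasisOfFinrankEq k V hV
  obtain ⟨a, b, c, d, f, g, hω⟩ := span_two e ω₀ (hW2 hω₀W)
  have hsq : ω₀ * ω₀ = ((2:k) * (a*g - b*f + c*d)) • Emax e := by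
    rw [hω, mul_formula]
    congr 1
    ring
  have hpl : a * g - b * f + c * d = 0 := by
    have h2 := smul_E_eq_zero e _ (hsq ▸ h₀)
    rcases mul_eq_zero.1 h2 with h | h
    · exact absurd h two_ne_zero
    · exact h
  have hcoef : a ≠ 0 ∨ b ≠ 0 ∨ c ≠ 0 ∨ d ≠ 0 ∨ f ≠ 0 ∨ g ≠ 0 := by
    by_contra hall
    push_neg at hall
    obtain ⟨h1, h2, h3, h4, h5, h6⟩ := hall
    exact hω₀ (by rw [hω, h1, h2, h3, h4, h5, h6]; simp)
  obtain ⟨p, hp⟩ : ∃ p : Module.Basis (Fin 4) k V,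
      ω₀ = ExteriorAlgebra.ι k (p 0) * ExteriorAlgebra.ι k (p 1) := by
    rcases hcoef with h | h | h | h | h | h
    · obtain ⟨p, hpr⟩ := case_a e a b c d f g hpl h; exact ⟨p, hω.trans hpr⟩
    · obtain ⟨p, hpr⟩ := case_b e a b c d f g hpl h; exact ⟨p, hω.trans hpr⟩
    · obtain ⟨p, hpr⟩ := case_c e a b c d f g hpl h; exact ⟨p, hω.trans hpr⟩
    · obtain ⟨p, hpr⟩ := case_d e a b c d f g hpl h; exact ⟨p, hω.trans hpr⟩
    · obtain ⟨p, hpr⟩ := case_f e a b c d f g hpl h; exact ⟨p, hω.trans hpr⟩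
    · obtain ⟨p, hpr⟩ := case_g e a b c d f g hpl h; exact ⟨p, hω.trans hpr⟩
  have hWfin : FiniteDimensional k W := FiniteDimensional.of_finrank_pos (by rw [hWrank]; norm_num)
  have hspan_lt : Submodule.span k {ω₀} < W := by
    refine lt_of_le_of_ne (by simpa [Submodule.span_le] using hω₀W) ?_
    intro hEq
    have h1 : Module.finrank k (Submodule.span k {ω₀}) = 1 := finrank_span_singleton hω₀
    rw [hEq, hWrank] at h1
    norm_num at h1
  obtain ⟨η, hηW, hηs⟩ := SetLike.exists_of_lt hspan_lt
  obtain ⟨a₂, b₂, c₂, d₂, f₂, g₂, hη⟩ := span_two p η (hW2 hηW)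
  have hω6 : ω₀ = (1:k) • (ExteriorAlgebra.ι k (p 0) * ExteriorAlgebra.ι k (p 1)) +
      (0:k) • (ExteriorAlgebra.ι k (p 0) * ExteriorAlgebra.ι k (p 2)) +
      (0:k) • (ExteriorAlgebra.ι k (p 0) * ExteriorAlgebra.ι k (p 3)) +
      (0:k) • (ExteriorAlgebra.ι k (p 1) * ExteriorAlgebra.ι k (p 2)) +
      (0:k) • (ExteriorAlgebra.ι k (p 1) * ExteriorAlgebra.ι k (p 3)) +
      (0:k) • (ExteriorAlgebra.ι k (p 2) * ExteriorAlgebra.ι k (p 3)) := by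
    rw [hp]; module
  have hωη : ω₀ * η = g₂ • Emax p := by
    rw [hω6, hη, mul_formula]; congr 1; ring
  have hηω : η * ω₀ = g₂ • Emax p := by
    rw [hη, hω6, mul_formula]; congr 1; ring
  have hηη : η * η = ((2:k) * (a₂*g₂ - b₂*f₂ + c₂*d₂)) • Emax p := by
    rw [hη, mul_formula]; congr 1; ring
  set G : k := a₂*g₂ - b₂*f₂ + c₂*d₂ with hGdef
  have hGne : G ≠ 0 := by
    intro hG
    obtain ⟨s, hs⟩ := htang η hηW (by rw [hηη, hG]; simp)
    exact hηs (helper_span_mem ω₀ η s hs)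
  have hg2 : g₂ = 0 := by
    by_contra hg2
    set t : k := -(g₂ / G) with htdef
    have htne : t ≠ 0 := neg_ne_zero.mpr (div_ne_zero hg2 hGne)
    have hωmem : ω₀ + t • η ∈ W := W.add_mem hω₀W (W.smul_mem _ hηW)
    have hsq2 : (ω₀ + t • η) * (ω₀ + t • η) = 0 := by
      rw [add_mul, mul_add, mul_add, smul_mul_assoc, smul_mul_assoc, mul_smul_comm,
        mul_smul_comm, h₀, hωη, hηω, hηη]
      rw [htdef]
      match_scalars
      field_simp
      ring
    obtain ⟨s, hs⟩ := htang _ hωmem hsq2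
    have h' : t • η = (s - 1) • ω₀ := by
      rw [sub_smul, one_smul, ← hs]
      abel
    have hfin2 : η = (t⁻¹ * (s - 1)) • ω₀ := by
      rw [mul_smul, ← h', smul_smul, inv_mul_cancel₀ htne, one_smul]
    exact hηs (helper_span_mem ω₀ η _ hfin2)
  obtain ⟨q, hq0, hq1, hq2, hq3⟩ := final_basis p b₂ c₂ d₂ f₂ (by
    intro h
    apply hGne
    rw [hGdef, hg2]
    linear_combination h)
  refine ⟨q, ?_⟩
  rw [hq0, hq1, hq2, hq3]
  have hYe : ExteriorAlgebra.ι k (p 0) * ExteriorAlgebra.ι k (b₂ • p 2 + c₂ • p 3) +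
      ExteriorAlgebra.ι k (p 1) * ExteriorAlgebra.ι k (d₂ • p 2 + f₂ • p 3) = η - a₂ • ω₀ := by
    rw [hη, hp, hg2]
    simp only [map_add, map_smul, mul_add, add_mul, mul_smul_comm, smul_mul_assoc]
    module
  rw [hYe, ← hp]
  have hYW : η - a₂ • ω₀ ∈ W := W.sub_mem hηW (W.smul_mem _ hω₀W)
  have hYne : η - a₂ • ω₀ ≠ 0 := by
    intro h
    exact hηs (helper_span_mem ω₀ η a₂ (by linear_combination (norm := module) h))
  have hli : LinearIndependent k ![ω₀, η - a₂ • ω₀] := by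
    rw [linearIndependent_fin2]
    refine ⟨by simpa using hYne, fun s hs => ?_⟩
    simp only [Matrix.cons_val_one, Matrix.cons_val_zero, Matrix.head_cons] at hs
    have hsne : s ≠ 0 := by
      intro h0
      rw [h0, zero_smul] at hs
      exact hω₀ hs.symm
    apply hηs
    refine helper_span_mem ω₀ η (s⁻¹ + a₂) ?_
    have hkey : η - a₂ • ω₀ = s⁻¹ • ω₀ := by
      have h2 := congrArg (fun z => s⁻¹ • z) hs
      simp only [smul_smul, inv_mul_cancel₀ hsne, one_smul] at h2
      exact h2 ▸ rfl
    linear_combination (norm := module) hkey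
  refine ⟨?_, hli⟩
  have hle : Submodule.span k {ω₀, η - a₂ • ω₀} ≤ W := by
    rw [Submodule.span_le]
    rintro z hz
    rcases hz with rfl | rfl
    · exact hω₀W
    · exact hYW
  have hrange : Set.range ![ω₀, η - a₂ • ω₀] = {ω₀, η - a₂ • ω₀} := by
    ext z
    simp [Fin.exists_fin_two, eq_comm, or_comm]
  have hfr : Module.finrank k (Submodule.span k {ω₀, η - a₂ • ω₀}) = 2 := by
    rw [← hrange, finrank_span_eq_card hli]
    simp
  exact Submodule.eq_of_le_of_finrank_le hle (by rw [hWrank, hfr])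
end

section
/- Let n ≥ 1 and m ≥ 1 be integers and let h_{ij} (1 ≤ i ≤ 2, 1 ≤ j ≤ m) be linear forms in S = k[x₀,…,x_n] such that for every nonzero vector a ∈ k^{n+1} the 2×m scalar matrix (h_{ij}(a)) has rank 2 (equivalently, the morphism ε : mO_{ℙⁿ} → 2O_{ℙⁿ}(1) defined by this matrix of linear forms is an epimorphism of sheaves). Then the k-linear map (S₁)^m → (S₂)² sending (ℓ₁,…,ℓ_m) to (Σⱼ h_{1j}ℓⱼ, Σⱼ h_{2j}ℓⱼ) is surjective (i.e., H⁰(ε(1)) : H⁰(mO_{ℙⁿ}(1)) → H⁰(2O_{ℙⁿ}(2)) is surjective). -/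
open MvPolynomial Module LinearMap Matrix

section helpers

lemma toMultiset_inj' {σ : Type*} [DecidableEq σ] {d e : σ →₀ ℕ}
    (h : Finsupp.toMultiset d = Finsupp.toMultiset e) : d = e := by
  have := congrArg Multiset.toFinsupp h
  rwa [Finsupp.toMultiset_toFinsupp, Finsupp.toMultiset_toFinsupp] at this

lemma finsupp_deg_one {σ : Type*} [DecidableEq σ] (d : σ →₀ ℕ)
    (hd : d.degree = 1) : ∃ a, d = Finsupp.single a 1 := by
  have hcard : Multiset.card (Finsupp.toMultiset d) = 1 := by
    rw [Finsupp.card_toMultiset]; exact hd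
  obtain ⟨a, ha⟩ := Multiset.card_eq_one.mp hcard
  refine ⟨a, toMultiset_inj' ?_⟩
  rw [ha, Finsupp.toMultiset_single, one_nsmul]

lemma finsupp_deg_two {σ : Type*} [DecidableEq σ] (d : σ →₀ ℕ)
    (hd : d.degree = 2) : ∃ a b, d = Finsupp.single a 1 + Finsupp.single b 1 := by
  have hcard : Multiset.card (Finsupp.toMultiset d) = 2 := by
    rw [Finsupp.card_toMultiset]; exact hd
  obtain ⟨a, b, hab⟩ := Multiset.card_eq_two.mp hcard
  refine ⟨a, b, toMultiset_inj' ?_⟩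
  rw [map_add, Finsupp.toMultiset_single, Finsupp.toMultiset_single, one_nsmul, one_nsmul, hab]
  rfl

lemma degree_of_mem_support {σ K : Type*} [CommSemiring K] {p : MvPolynomial σ K} {nn : ℕ}
    (hp : p.IsHomogeneous nn) {d : σ →₀ ℕ} (hd : p.coeff d ≠ 0) : d.degree = nn := by
  have := hp hd
  rw [Finsupp.degree_eq_weight_one]; exact this

lemma homog_one_rep {σ K : Type*} [Fintype σ] [DecidableEq σ] [CommSemiring K]
    (p : MvPolynomial σ K) (hp : p.IsHomogeneous 1) :
    p = ∑ q : σ, MvPolynomial.C (p.coeff (Finsupp.single q 1)) * MvPolynomial.X q := by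
  apply MvPolynomial.ext
  intro e
  rw [MvPolynomial.coeff_sum]
  by_cases he : ∃ q0, e = Finsupp.single q0 1
  · obtain ⟨q0, rfl⟩ := he
    rw [Finset.sum_eq_single q0]
    · simp
    · intro q _ hq
      have : ¬ (Finsupp.single q 1 = Finsupp.single q0 1) := by
        simpa [Finsupp.single_left_inj (one_ne_zero)] using hq
      simp [MvPolynomial.coeff_C_mul, MvPolynomial.coeff_X', this]
    · simp
  · have h1 : p.coeff e = 0 := by
      by_contra hne
      obtain ⟨a, ha⟩ := finsupp_deg_one e (degree_of_mem_support hp hne)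
      exact he ⟨a, ha⟩
    rw [h1]
    symm
    apply Finset.sum_eq_zero
    intro q _
    have : ¬ (Finsupp.single q 1 = e) := fun hh => he ⟨q, hh.symm⟩
    simp [MvPolynomial.coeff_C_mul, MvPolynomial.coeff_X', this]

end helpers

open Polynomial in

theorem pencil {k : Type*} [Field k] [IsAlgClosed k] [CharZero k]
    {V W : Type*} [AddCommGroup V] [Module k V] [FiniteDimensional k V]
    [AddCommGroup W] [Module k W] [FiniteDimensional k W]
    (f g : V →ₗ[k] W) (Z : Submodule k W)
    (hZdim : finrank k Z + finrank k (ker f ⊓ ker g : Submodule k V) = finrank k V)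
    (hrange : ∀ v : V, f v ∈ Z ∧ g v ∈ Z)
    (hker : ∀ α β : k, ¬(α = 0 ∧ β = 0) → ∀ v, α • f v + β • g v = 0 → f v = 0 ∧ g v = 0) :
    f = 0 ∧ g = 0 := by
  set N : Submodule k V := ker f ⊓ ker g with hNdef
  by_cases hNtop : N = ⊤
  · have hall : ∀ v : V, f v = 0 ∧ g v = 0 := by
      intro v
      have hv : v ∈ N := hNtop ▸ Submodule.mem_top
      exact ⟨(Submodule.mem_inf.mp hv).1, (Submodule.mem_inf.mp hv).2⟩
    exact ⟨LinearMap.ext fun v => (hall v).1, LinearMap.ext fun v => (hall v).2⟩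
  · exfalso
    have hfZ : ∀ v, f v ∈ Z := fun v => (hrange v).1
    have hgZ : ∀ v, g v ∈ Z := fun v => (hrange v).2
    set f' : V →ₗ[k] Z := f.codRestrict Z hfZ with hf'
    set g' : V →ₗ[k] Z := g.codRestrict Z hgZ with hg'
    have hNf : N ≤ ker f' := by
      intro x hx
      rw [mem_ker]
      ext
      exact (Submodule.mem_inf.mp hx).1
    have hNg : N ≤ ker g' := by
      intro x hx
      rw [mem_ker]
      ext
      exact (Submodule.mem_inf.mp hx).2
    set fbar : (V ⧸ N) →ₗ[k] Z := N.liftQ f' hNf with hfbar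
    set gbar : (V ⧸ N) →ₗ[k] Z := N.liftQ g' hNg with hgbar
    have hfin : finrank k Z = finrank k (V ⧸ N) := by
      have h2 := N.finrank_quotient_add_finrank
      omega
    set e : Z ≃ₗ[k] (V ⧸ N) := LinearEquiv.ofFinrankEq _ _ hfin with he
    set F : (V ⧸ N) →ₗ[k] (V ⧸ N) := e.toLinearMap ∘ₗ fbar with hF
    set G : (V ⧸ N) →ₗ[k] (V ⧸ N) := e.toLinearMap ∘ₗ gbar with hG
    have happ : ∀ (α β : k) (x : V),
        (α • F + β • G) (N.mkQ x) = e (α • f' x + β • g' x) := by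
      intro α β x
      have h1 : F (N.mkQ x) = e (f' x) := rfl
      have h2 : G (N.mkQ x) = e (g' x) := rfl
      rw [LinearMap.add_apply, LinearMap.smul_apply, LinearMap.smul_apply, h1, h2, _root_.map_add, _root_.map_smul, _root_.map_smul]
    have hdet : ∀ α β : k, ¬(α = 0 ∧ β = 0) → LinearMap.det (α • F + β • G) ≠ 0 := by
      intro α β hab hd0
      obtain ⟨y, hy, hyne⟩ : ∃ y, (α • F + β • G) y = 0 ∧ y ≠ 0 := by
        have := LinearMap.bot_lt_ker_of_det_eq_zero hd0
        obtain ⟨y, hy1, hy2⟩ := SetLike.exists_of_lt this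
        exact ⟨y, hy1, fun hh => hy2 (by simp [hh])⟩
      obtain ⟨x, rfl⟩ := N.mkQ_surjective y
      rw [happ] at hy
      have hz0 : α • f' x + β • g' x = 0 := e.map_eq_zero_iff.mp hy
      have hz : α • f x + β • g x = 0 := by
        have := congrArg Subtype.val hz0
        simp at this; exact this
      have hfg := hker α β hab x hz
      apply hyne
      rw [Submodule.mkQ_apply, Submodule.Quotient.mk_eq_zero]
      exact Submodule.mem_inf.mpr ⟨mem_ker.mpr hfg.1, mem_ker.mpr hfg.2⟩
    set r := finrank k (V ⧸ N) with hr
    have hrpos : 0 < r := by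
      have h2 := N.finrank_quotient_add_finrank
      have h3 : finrank k N < finrank k V := Submodule.finrank_lt hNtop
      omega
    set b : Basis (Fin r) k (V ⧸ N) := finBasis k (V ⧸ N) with hb
    set Fm := LinearMap.toMatrix b b F with hFm
    set Gm := LinearMap.toMatrix b b G with hGm
    have hdetm : ∀ α β : k, ¬(α = 0 ∧ β = 0) → (α • Fm + β • Gm).det ≠ 0 := by
      intro α β hab
      have h4 : α • Fm + β • Gm = LinearMap.toMatrix b b (α • F + β • G) := by
        rw [_root_.map_add, _root_.map_smul, _root_.map_smul]
      rw [h4, LinearMap.det_toMatrix]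
      exact hdet α β hab
    set P : Matrix (Fin r) (Fin r) (Polynomial k) :=
      Matrix.of fun i j => Polynomial.C (Fm i j) + Polynomial.C (Gm i j) * Polynomial.X with hP
    set p : Polynomial k := P.det with hp
    have hevalp : ∀ t : k, p.eval t = (Fm + t • Gm).det := by
      intro t
      have h5 := RingHom.map_det (Polynomial.evalRingHom t) P
      rw [hp, show Polynomial.eval t P.det = (Polynomial.evalRingHom t) P.det from rfl, h5]
      congr 1
      ext i j
      simp only [RingHom.mapMatrix_apply, Matrix.map_apply, hP, Matrix.of_apply,
        Polynomial.coe_evalRingHom, Polynomial.eval_add, Polynomial.eval_mul, Polynomial.eval_C,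
        Polynomial.eval_X, Matrix.add_apply, Matrix.smul_apply, smul_eq_mul]
      ring
    have hnoroot : ∀ t : k, p.eval t ≠ 0 := by
      intro t
      rw [hevalp]
      have := hdetm 1 t (by simp)
      simpa using this
    have hdeg0 : p.degree ≤ 0 := by
      by_contra hd
      have hd' : p.degree ≠ 0 := fun hh => hd (le_of_eq hh)
      obtain ⟨t, ht⟩ := IsAlgClosed.exists_root p hd'
      exact hnoroot t ht
    set c := p.coeff 0 with hc
    have hpc : p = Polynomial.C c := Polynomial.eq_C_of_degree_le_zero hdeg0
    have hcne : c ≠ 0 := by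
      have := hnoroot 0
      rw [hpc] at this
      simpa using this
    set s : Polynomial k :=
      (Matrix.of fun i j => Polynomial.C (Fm i j) * Polynomial.X + Polynomial.C (Gm i j) :
        Matrix (Fin r) (Fin r) (Polynomial k)).det with hs
    have hevals : ∀ t : k, s.eval t = (t • Fm + Gm).det := by
      intro t
      have h5 := RingHom.map_det (Polynomial.evalRingHom t)
        (Matrix.of fun i j => Polynomial.C (Fm i j) * Polynomial.X + Polynomial.C (Gm i j) :
          Matrix (Fin r) (Fin r) (Polynomial k))
      rw [hs, show Polynomial.eval t _ = (Polynomial.evalRingHom t) _ from rfl, h5]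
      congr 1
      ext i j
      simp only [RingHom.mapMatrix_apply, Matrix.map_apply, Matrix.of_apply,
        Polynomial.coe_evalRingHom, Polynomial.eval_add, Polynomial.eval_mul, Polynomial.eval_C,
        Polynomial.eval_X, Matrix.add_apply, Matrix.smul_apply, smul_eq_mul]
      ring
    have hkey : ∀ t : k, t ≠ 0 → s.eval t = c * t ^ r := by
      intro t ht
      rw [hevals]
      have h1 : t • Fm + Gm = t • (Fm + t⁻¹ • Gm) := by
        rw [smul_add, smul_smul, mul_inv_cancel₀ ht, one_smul]
      rw [h1, Matrix.det_smul, ← hevalp, hpc]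
      simp [Fintype.card_fin, mul_comm]
    have hsX : s = Polynomial.C c * Polynomial.X ^ r := by
      apply Polynomial.eq_of_infinite_eval_eq
      apply Set.Infinite.mono (s := {x : k | x ≠ 0})
      · intro x hx
        simp only [Set.mem_setOf_eq] at hx ⊢
        rw [hkey x hx]
        simp
      · exact Set.Finite.infinite_compl (Set.finite_singleton (0 : k))
    have h0 : s.eval 0 = 0 := by
      have hz : (0:k) ^ r = 0 := zero_pow (by omega)
      rw [hsX]
      simp [hz]
    rw [hevals 0] at h0
    have h6 := hdetm 0 1 (by simp)
    simp only [zero_smul, one_smul, zero_add] at h0 h6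
    exact h6 h0


lemma surj_of_dual {k M N : Type*} [Field k] [AddCommGroup M] [Module k M]
    [AddCommGroup N] [Module k N] (Φ : M →ₗ[k] N)
    (h : ∀ φ : Module.Dual k N, (∀ x, φ (Φ x) = 0) → φ = 0) :
    Function.Surjective Φ := by
  rw [← LinearMap.range_eq_top]
  by_contra hne
  obtain ⟨y, hy⟩ : ∃ y, y ∉ LinearMap.range Φ := by
    by_contra hh
    push_neg at hh
    exact hne (Submodule.eq_top_iff'.mpr hh)
  set π := (LinearMap.range Φ).mkQ with hπ
  have hπy : π y ≠ 0 := by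
    rw [hπ, Submodule.mkQ_apply, ne_eq, Submodule.Quotient.mk_eq_zero]
    exact hy
  obtain ⟨ψ, hψ⟩ : ∃ ψ : Module.Dual k (N ⧸ LinearMap.range Φ), ψ (π y) ≠ 0 := by
    by_contra h'
    push_neg at h'
    exact hπy ((Module.forall_dual_apply_eq_zero_iff k _).mp h')
  have hzero : (ψ ∘ₗ π) = 0 := by
    apply h
    intro x
    have : π (Φ x) = 0 := by
      rw [hπ, Submodule.mkQ_apply, Submodule.Quotient.mk_eq_zero]
      exact LinearMap.mem_range_self Φ x
    simp [this]
  exact hψ (by simpa using LinearMap.congr_fun hzero y)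



set_option maxHeartbeats 2000000 in
/-- Let `n, m ≥ 1` and let `h i j` (`i : Fin 2`, `j : Fin m`) be linear forms
in `S = k[x₀,…,xₙ]` such that for every nonzero `a ∈ k^{n+1}` the `2 × m` matrix
`(h i j (a))` has rank 2 (i.e. the associated morphism `ε : mO_{ℙⁿ} → 2O_{ℙⁿ}(1)` is an
epimorphism).  Then the `k`-linear map `(S₁)^m → (S₂)²`,
`(ℓ₁,…,ℓ_m) ↦ (Σⱼ h₁ⱼℓⱼ, Σⱼ h₂ⱼℓⱼ)`, is surjective (i.e. `H⁰(ε(1))` is surjective). -/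
theorem stmt_4 {k : Type*} [Field k] [IsAlgClosed k] [CharZero k]
    (n m : ℕ) (hn : 1 ≤ n) (hm : 1 ≤ m)
    (h : Fin 2 → Fin m → MvPolynomial (Fin (n + 1)) k)
    (hdeg : ∀ i j, (h i j).IsHomogeneous 1)
    (hrank : ∀ a : Fin (n + 1) → k, a ≠ 0 →
      (Matrix.of fun i j => MvPolynomial.eval a (h i j)).rank = 2)
    (q : Fin 2 → MvPolynomial (Fin (n + 1)) k)
    (hq : ∀ i, (q i).IsHomogeneous 2) :
    ∃ ℓ : Fin m → MvPolynomial (Fin (n + 1)) k,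
      (∀ j, (ℓ j).IsHomogeneous 1) ∧ ∀ i, ∑ j, h i j * ℓ j = q i := by
  classical
  let R := MvPolynomial (Fin (n + 1)) k
  let S1 := homogeneousSubmodule (Fin (n + 1)) k 1
  let S2 := homogeneousSubmodule (Fin (n + 1)) k 2
  have hmul_mem : ∀ (i : Fin 2) (j : Fin m) (ℓ : S1), h i j * (ℓ : R) ∈ S2 := by
    intro i j ℓ
    have hℓ : (ℓ : R).IsHomogeneous 1 := (mem_homogeneousSubmodule _ _).mp ℓ.2
    rw [mem_homogeneousSubmodule]
    simpa using (hdeg i j).mul hℓ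
  set mulMap : Fin 2 → Fin m → (S1 →ₗ[k] S2) := fun i j =>
    LinearMap.codRestrict S2 ((LinearMap.mulLeft k (h i j)).comp S1.subtype)
      (hmul_mem i j) with hmulMapd
  set Φ : (Fin m → S1) →ₗ[k] (Fin 2 → S2) :=
    LinearMap.pi (fun i : Fin 2 => ∑ j : Fin m,
      (mulMap i j) ∘ₗ (LinearMap.proj j : (Fin m → S1) →ₗ[k] S1)) with hΦd
  have hΦapply : ∀ (ℓ : Fin m → S1) (i : Fin 2),
      ((Φ ℓ i : S2) : R) = ∑ j, h i j * (ℓ j : R) := by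
    intro ℓ i
    rw [hΦd, LinearMap.pi_apply, LinearMap.sum_apply]
    rw [Submodule.coe_sum]
    apply Finset.sum_congr rfl
    intro j _
    rfl
  suffices hsurj : Function.Surjective Φ by
    obtain ⟨ℓ', hℓ'⟩ := hsurj (fun i => ⟨q i, (mem_homogeneousSubmodule _ _).mpr (hq i)⟩)
    refine ⟨fun j => (ℓ' j : R), fun j => (mem_homogeneousSubmodule _ _).mp (ℓ' j).2, ?_⟩
    intro i
    have h1 := congrFun hℓ' i
    have h2 := congrArg Subtype.val h1
    rw [hΦapply] at h2
    exact h2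
  -- surjectivity via duality
  apply surj_of_dual
  intro φ hφ0
  set φc : Fin 2 → (S2 →ₗ[k] k) :=
    fun i => φ ∘ₗ (LinearMap.single k (fun _ : Fin 2 => S2) i) with hφc
  have hφdecomp : ∀ v : Fin 2 → S2, φ v = ∑ i, φc i (v i) := by
    intro v
    have hv : v = ∑ i, Pi.single i (v i) := (Finset.univ_sum_single v).symm
    conv_lhs => rw [hv]
    rw [map_sum]
    rfl
  set Ψ : Fin 2 → (MvPolynomial (Fin (n+1)) k →ₗ[k] k) := fun i =>
    (φc i) ∘ₗ (LinearMap.codRestrict S2 (homogeneousComponent 2)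
      (fun p => (mem_homogeneousSubmodule _ _).mpr (homogeneousComponent_isHomogeneous 2 p))) with hΨd
  have hΨ : ∀ (i : Fin 2) (p : R) (hp : p ∈ S2), Ψ i p = φc i ⟨p, hp⟩ := by
    intro i p hp
    rw [hΨd]
    simp only [LinearMap.comp_apply]
    congr 1
    ext
    simp only [LinearMap.codRestrict_apply]
    rw [homogeneousComponent_of_mem hp]
    simp
  have hΨ' : ∀ (i : Fin 2) (z : S2), φc i z = Ψ i (z : R) := by
    intro i z
    obtain ⟨pz, hpz⟩ := z
    exact (hΨ i pz hpz).symm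
  set A : Fin 2 → Matrix (Fin (n+1)) (Fin (n+1)) k :=
    fun i => Matrix.of fun p q' => Ψ i (MvPolynomial.X p * MvPolynomial.X q') with hA
  have hAsymm : ∀ (i : Fin 2) (p q' : Fin (n+1)), A i p q' = A i q' p := by
    intro i p q'
    rw [hA]
    simp only [Matrix.of_apply]
    rw [mul_comm]
  set Cv : Fin 2 → Fin m → (Fin (n+1) → k) :=
    fun i j p => (h i j).coeff (Finsupp.single p 1) with hCv
  have hrep : ∀ i j, h i j = ∑ p, MvPolynomial.C (Cv i j p) * MvPolynomial.X p :=
    fun i j => homog_one_rep _ (hdeg i j)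
  have hΨmul : ∀ (i : Fin 2) (j : Fin m) (p : Fin (n+1)),
      Ψ i (h i j * MvPolynomial.X p) = ∑ q', Cv i j q' * A i q' p := by
    intro i j p
    conv_lhs => rw [hrep i j]
    rw [Finset.sum_mul, map_sum]
    apply Finset.sum_congr rfl
    intro q' _
    have hsm : MvPolynomial.C (Cv i j q') * MvPolynomial.X q' * MvPolynomial.X p
        = Cv i j q' • (MvPolynomial.X q' * MvPolynomial.X p) := by
      rw [MvPolynomial.smul_eq_C_mul, mul_assoc]
    rw [hsm, _root_.map_smul, smul_eq_mul]
    rfl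
  -- the orthogonality relations
  have hAv : ∀ j : Fin m, A 0 *ᵥ Cv 0 j + A 1 *ᵥ Cv 1 j = 0 := by
    intro j
    funext p
    have hXp : (MvPolynomial.X p : R) ∈ S1 :=
      (mem_homogeneousSubmodule _ _).mpr (isHomogeneous_X _ _)
    have hx := hφ0 (Pi.single j (⟨MvPolynomial.X p, hXp⟩ : S1))
    rw [hφdecomp] at hx
    have hcomp : ∀ i : Fin 2, Φ (Pi.single j (⟨MvPolynomial.X p, hXp⟩ : S1)) i
        = mulMap i j ⟨MvPolynomial.X p, hXp⟩ := by
      intro i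
      rw [hΦd, LinearMap.pi_apply, LinearMap.sum_apply]
      rw [Finset.sum_eq_single j]
      · simp
      · intro j' _ hj'
        simp [Pi.single_eq_of_ne hj']
      · simp
    have hval : ∀ i : Fin 2, φc i (Φ (Pi.single j (⟨MvPolynomial.X p, hXp⟩ : S1)) i)
        = ∑ q', Cv i j q' * A i q' p := by
      intro i
      rw [hcomp i, hΨ' i, ← hΨmul i j p]
      rfl
    rw [Fin.sum_univ_two, hval 0, hval 1] at hx
    have hgoal : (A 0 *ᵥ Cv 0 j) p + (A 1 *ᵥ Cv 1 j) p = 0 := by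
      have he0 : (A 0 *ᵥ Cv 0 j) p = ∑ q', Cv 0 j q' * A 0 q' p := by
        rw [Matrix.mulVec]
        simp only [dotProduct]
        apply Finset.sum_congr rfl
        intro q' _
        rw [hAsymm 0 p q', mul_comm]
      have he1 : (A 1 *ᵥ Cv 1 j) p = ∑ q', Cv 1 j q' * A 1 q' p := by
        rw [Matrix.mulVec]
        simp only [dotProduct]
        apply Finset.sum_congr rfl
        intro q' _
        rw [hAsymm 1 p q', mul_comm]
      rw [he0, he1]
      exact hx
    simpa using hgoal
  -- evaluation bridge
  have heval : ∀ (i : Fin 2) (j : Fin m) (b : Fin (n+1) → k),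
      MvPolynomial.eval b (h i j) = Cv i j ⬝ᵥ b := by
    intro i j b
    conv_lhs => rw [hrep i j]
    rw [map_sum]
    apply Finset.sum_congr rfl
    intro p _
    simp
  -- linear independence of the rows at a nonzero point
  have hrows : ∀ b : Fin (n+1) → k, b ≠ 0 → ∀ lam : Fin 2 → k,
      (∀ j, lam 0 * MvPolynomial.eval b (h 0 j) + lam 1 * MvPolynomial.eval b (h 1 j) = 0) →
      lam = 0 := by
    intro b hb lam hlam
    set M : Matrix (Fin 2) (Fin m) k := Matrix.of fun i j => MvPolynomial.eval b (h i j) with hM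
    have hMv : Mᵀ.mulVecLin lam = 0 := by
      funext j
      rw [Matrix.mulVecLin_apply, Matrix.mulVec]
      simp only [dotProduct, Fin.sum_univ_two, Matrix.transpose_apply]
      have := hlam j
      rw [hM]
      simp only [Matrix.of_apply, Pi.zero_apply]
      rw [mul_comm (lam 0) (MvPolynomial.eval b (h 0 j)), mul_comm (lam 1) (MvPolynomial.eval b (h 1 j))] at this
      exact this
    have hrk : Mᵀ.rank = 2 := by
      rw [Matrix.rank_transpose]
      exact hrank b hb
    have hker : LinearMap.ker Mᵀ.mulVecLin = ⊥ := by
      have h1 := LinearMap.finrank_range_add_finrank_ker Mᵀ.mulVecLin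
      have h2 : finrank k (Fin 2 → k) = 2 := by simp
      rw [h2] at h1
      have h3 : finrank k (LinearMap.range Mᵀ.mulVecLin) = 2 := hrk
      rw [h3] at h1
      exact Submodule.finrank_eq_zero.mp (by omega)
    have : lam ∈ LinearMap.ker Mᵀ.mulVecLin := hMv
    rw [hker] at this
    simpa using this
  -- set up the pencil
  set f : (Fin (n+1) → k) →ₗ[k] (Fin (n+1) → k) := (A 0).mulVecLin with hfd
  set g : (Fin (n+1) → k) →ₗ[k] (Fin (n+1) → k) := (A 1).mulVecLin with hgd
  set N : Submodule k (Fin (n+1) → k) := LinearMap.ker f ⊓ LinearMap.ker g with hNd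
  set bV := Pi.basisFun k (Fin (n+1)) with hbVd
  have htd : ∀ x w : Fin (n + 1) → k, bV.toDual x w = w ⬝ᵥ x := by
    intro x w
    have hw : w = ∑ t, w t • bV t := by
      funext u
      rw [Finset.sum_apply]
      simp [hbVd, Pi.single_apply]
    conv_lhs => rw [hw]
    rw [map_sum]
    rw [dotProduct]
    apply Finset.sum_congr rfl
    intro t _
    rw [_root_.map_smul, Basis.toDual_apply_left, smul_eq_mul, hbVd, Pi.basisFun_repr]
  set Z : Submodule k (Fin (n+1) → k) :=
    N.dualAnnihilator.comap bV.toDualEquiv.toLinearMap with hZd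
  have hmemZ : ∀ x, x ∈ Z ↔ ∀ w ∈ N, w ⬝ᵥ x = 0 := by
    intro x
    rw [hZd, Submodule.mem_comap, Submodule.mem_dualAnnihilator]
    constructor
    · intro hx w hw
      have := hx w hw
      rwa [LinearEquiv.coe_coe, Basis.toDualEquiv_apply, htd] at this
    · intro hx w hw
      rw [LinearEquiv.coe_coe, Basis.toDualEquiv_apply, htd]
      exact hx w hw
  have hZdim : finrank k Z + finrank k N = finrank k (Fin (n+1) → k) := by
    have e1 : finrank k Z = finrank k N.dualAnnihilator := by
      rw [hZd, Submodule.comap_equiv_eq_map_symm]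
      exact LinearEquiv.finrank_map_eq _ _
    have e2 : finrank k N.dualAnnihilator = finrank k ((Fin (n+1) → k) ⧸ N) :=
      ((Subspace.quotEquivAnnihilator N).finrank_eq).symm
    rw [e1, e2]
    have h3 := N.finrank_quotient_add_finrank
    omega
  have hsymA : ∀ i : Fin 2, (A i)ᵀ = A i := by
    intro i
    apply Matrix.ext
    intro p q'
    rw [Matrix.transpose_apply]
    exact hAsymm i q' p
  have hsymdot : ∀ (i : Fin 2) (v w : Fin (n+1) → k), w ⬝ᵥ (A i *ᵥ v) = (A i *ᵥ w) ⬝ᵥ v := by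
    intro i v w
    calc w ⬝ᵥ (A i *ᵥ v) = (w ᵥ* A i) ⬝ᵥ v := Matrix.dotProduct_mulVec w (A i) v
    _ = ((A i)ᵀ *ᵥ w) ⬝ᵥ v := by rw [← Matrix.mulVec_transpose]
    _ = (A i *ᵥ w) ⬝ᵥ v := by rw [hsymA]
  have hrangeP : ∀ v, f v ∈ Z ∧ g v ∈ Z := by
    intro v
    have hgen : ∀ i : Fin 2, A i *ᵥ v ∈ Z := by
      intro i
      rw [hmemZ]
      intro w hw
      have hw0 : A i *ᵥ w = 0 := by
        have hw1 := (Submodule.mem_inf.mp hw).1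
        have hw2 := (Submodule.mem_inf.mp hw).2
        rw [LinearMap.mem_ker, hfd, Matrix.mulVecLin_apply] at hw1
        rw [LinearMap.mem_ker, hgd, Matrix.mulVecLin_apply] at hw2
        fin_cases i
        · exact hw1
        · exact hw2
      rw [hsymdot i v w, hw0, zero_dotProduct]
    exact ⟨hgen 0, hgen 1⟩
  have hkerP : ∀ α β : k, ¬(α = 0 ∧ β = 0) → ∀ v, α • f v + β • g v = 0 → f v = 0 ∧ g v = 0 := by
    intro α β hab v hv
    set a := A 0 *ᵥ v with had
    set b := A 1 *ᵥ v with hbd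
    have hv' : α • a + β • b = 0 := hv
    have hrel : ∀ j, Cv 0 j ⬝ᵥ a + Cv 1 j ⬝ᵥ b = 0 := by
      intro j
      have h1 := congrArg (fun u => u ⬝ᵥ v) (hAv j)
      simp only [add_dotProduct, zero_dotProduct] at h1
      rw [← hsymdot 0 v (Cv 0 j), ← hsymdot 1 v (Cv 1 j)] at h1
      exact h1
    have hb0 : b = 0 := by
      by_contra hbne
      have hane : α ≠ 0 := by
        intro h0
        rw [h0, zero_smul, zero_add] at hv'
        have hβ : β ≠ 0 := fun hβ0 => hab ⟨h0, hβ0⟩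
        exact hbne (by simpa [smul_eq_zero, hβ] using hv')
      have haval : a = (-(α⁻¹ * β)) • b := by
        have h2 : α • a = -(β • b) := eq_neg_of_add_eq_zero_left hv'
        calc a = α⁻¹ • (α • a) := by rw [smul_smul, inv_mul_cancel₀ hane, one_smul]
        _ = α⁻¹ • (-(β • b)) := by rw [h2]
        _ = (-(α⁻¹ * β)) • b := by rw [smul_neg, smul_smul, ← neg_smul]
      have happly := hrows b hbne ![-(α⁻¹ * β), 1] ?_
      · have hcontra := congrFun happly 1
        simp at hcontra
      · intro j
        rw [heval 0 j b, heval 1 j b]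
        have h3 := hrel j
        rw [haval, dotProduct_smul] at h3
        simp only [Matrix.cons_val_zero, Matrix.cons_val_one, Matrix.head_cons]
        rw [one_mul]
        simpa using h3
    have ha0 : a = 0 := by
      by_contra hane
      have happly := hrows a hane ![1, 0] ?_
      · have hcontra := congrFun happly 0
        simp at hcontra
      · intro j
        rw [heval 0 j a, heval 1 j a]
        have h3 := hrel j
        rw [hb0, dotProduct_zero] at h3
        simp only [Matrix.cons_val_zero, Matrix.cons_val_one, Matrix.head_cons]
        rw [one_mul, zero_mul, add_zero]
        simpa using h3
    constructor
    · show (A 0).mulVecLin v = 0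
      rw [Matrix.mulVecLin_apply, ← had]
      exact ha0
    · show (A 1).mulVecLin v = 0
      rw [Matrix.mulVecLin_apply, ← hbd]
      exact hb0
  obtain ⟨hf0, hg0⟩ := pencil f g Z hZdim hrangeP hkerP
  -- the matrices vanish
  have hA0 : ∀ (i : Fin 2) (p q' : Fin (n+1)), A i p q' = 0 := by
    intro i p q'
    have hzero : (A i).mulVecLin = 0 := by
      fin_cases i
      · exact hf0
      · exact hg0
    have h1 : A i *ᵥ Pi.single q' 1 = 0 := by
      rw [← Matrix.mulVecLin_apply, hzero]
      rfl
    have h2 := congrFun h1 p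
    simpa [Matrix.mulVec_single] using h2
  -- the functionals vanish
  have hφczero : ∀ i : Fin 2, φc i = 0 := by
    intro i
    apply LinearMap.ext
    rintro ⟨pz, hpz⟩
    rw [← hΨ i pz hpz, LinearMap.zero_apply]
    have hpz' : pz.IsHomogeneous 2 := (mem_homogeneousSubmodule _ _).mp hpz
    have hdecomp : pz = ∑ d ∈ pz.support, MvPolynomial.monomial d (MvPolynomial.coeff d pz) :=
      (MvPolynomial.support_sum_monomial_coeff pz).symm
    conv_lhs => rw [hdecomp]
    rw [map_sum]
    apply Finset.sum_eq_zero
    intro d hd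
    have hdeg2 : d.degree = 2 := degree_of_mem_support hpz' (MvPolynomial.mem_support_iff.mp hd)
    obtain ⟨da, db, hab2⟩ := finsupp_deg_two d hdeg2
    have hmon : (MvPolynomial.monomial d (MvPolynomial.coeff d pz) : R)
        = (MvPolynomial.coeff d pz) • (MvPolynomial.X da * MvPolynomial.X db) := by
      have hXX : (MvPolynomial.X da * MvPolynomial.X db : R)
          = MvPolynomial.monomial (Finsupp.single da 1 + Finsupp.single db 1) 1 := by
        rw [MvPolynomial.X, MvPolynomial.X, MvPolynomial.monomial_mul, one_mul]
      rw [hXX, MvPolynomial.smul_monomial, hab2, smul_eq_mul, mul_one]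
    rw [hmon, _root_.map_smul, smul_eq_mul]
    have hΨA : Ψ i (MvPolynomial.X da * MvPolynomial.X db) = A i da db := rfl
    rw [hΨA, hA0 i da db, mul_zero]
  apply LinearMap.ext
  intro v
  rw [hφdecomp v, LinearMap.zero_apply, Fin.sum_univ_two, hφczero 0, hφczero 1]
  simp
end

section
/- Let n ≥ 1 and m ≥ 1 be integers and let h_{ij} (1 ≤ i ≤ 2, 1 ≤ j ≤ m) be linear forms in S = k[x₀,…,x_n] such that for every nonzero vector a ∈ k^{n+1} the 2×m scalar matrix (h_{ij}(a)) has rank 2 (the associated morphism ε : mO_{ℙⁿ} → 2O_{ℙⁿ}(1) is an epimorphism). Assume moreover that the k-linear map k^m → (S₁)², c ↦ (Σⱼ h_{1j}cⱼ, Σⱼ h_{2j}cⱼ), is not surjective (i.e., H⁰(ε) is not surjective). Then there exist linearly independent vectors a, b ∈ k^{n+1} such that the kernel of the k-linear map k^m → (k[s,t]₁)², c ↦ (Σⱼ h_{1j}(s·a + t·b)·cⱼ, Σⱼ h_{2j}(s·a + t·b)·cⱼ), has dimension exactly m − 3, where h_{ij}(s·a + t·b) ∈ k[s,t] denotes the binary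 linear form obtained by substituting x_r = s·a_r + t·b_r. Equivalently, the restriction of the kernel bundle K = Ker ε to the line L through a and b splits as (m−3)O_L ⊕ O_L(−2); in particular K(1) is not globally generated. -/
open MvPolynomial Matrix Module

private lemma finsupp_degree_one {σ : Type*} (d : σ →₀ ℕ) (hd : d.degree = 1) :
    ∃ r, d = Finsupp.single r 1 := by
  classical
  have hd0 : d ≠ 0 := by
    rintro rfl; simp [map_zero] at hd
  obtain ⟨r, hr⟩ := Finsupp.support_nonempty_iff.mpr hd0
  have hsum : d.degree = d r + ∑ i ∈ d.support.erase r, d i := by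
    rw [Finsupp.degree_apply, ← Finset.add_sum_erase _ _ hr]
  have hr1 : 1 ≤ d r := Nat.one_le_iff_ne_zero.mpr (Finsupp.mem_support_iff.mp hr)
  have hrest : ∑ i ∈ d.support.erase r, d i = 0 := by omega
  have hdr : d r = 1 := by omega
  refine ⟨r, ?_⟩
  ext i
  rcases eq_or_ne i r with rfl | hir
  · simp [hdr]
  · have : d i = 0 := by
      by_contra hne
      have hi : i ∈ d.support.erase r := Finset.mem_erase.mpr ⟨hir, Finsupp.mem_support_iff.mpr hne⟩
      exact hne (Finset.sum_eq_zero_iff.mp hrest i hi)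
    simp [this, Finsupp.single_apply, (Ne.symm hir)]

private lemma hom1_eq_sum {k : Type*} [CommSemiring k] {σ : Type*} [Fintype σ] [DecidableEq σ]
    (p : MvPolynomial σ k) (hp : p.IsHomogeneous 1) :
    p = ∑ r, (coeff (Finsupp.single r 1) p) • X r := by
  ext d
  rw [coeff_sum]
  simp only [coeff_smul, coeff_X', smul_eq_mul, mul_ite, mul_one, mul_zero]
  by_cases hd : d.degree = 1
  · obtain ⟨r₀, rfl⟩ := finsupp_degree_one d hd
    rw [Finset.sum_eq_single r₀]
    · simp
    · intro r _ hrr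
      rw [if_neg]
      intro hc
      exact hrr ((Finsupp.single_left_inj one_ne_zero).mp hc)
    · simp
  · rw [hp.coeff_eq_zero hd]
    rw [Finset.sum_eq_zero]
    intro r _
    rw [if_neg]
    intro hc
    apply hd
    rw [← hc]
    simp [Finsupp.degree_apply, Finsupp.support_single_ne_zero _ (one_ne_zero)]

private lemma eval_hom1 {k : Type*} [CommSemiring k] {σ : Type*} [Fintype σ] [DecidableEq σ]
    (p : MvPolynomial σ k) (hp : p.IsHomogeneous 1) (a : σ → k) :
    eval a p = ∑ r, coeff (Finsupp.single r 1) p * a r := by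
  conv_lhs => rw [hom1_eq_sum p hp]
  simp [smul_eq_C_mul, map_sum]

private lemma eval_hom1_lin {k : Type*} [CommRing k] {σ : Type*} [Fintype σ] [DecidableEq σ]
    (p : MvPolynomial σ k) (hp : p.IsHomogeneous 1) (c d : k) (a b : σ → k) :
    eval (c • a + d • b) p = c * eval a p + d * eval b p := by
  rw [eval_hom1 p hp, eval_hom1 p hp, eval_hom1 p hp, Finset.mul_sum, Finset.mul_sum,
    ← Finset.sum_add_distrib]
  refine Finset.sum_congr rfl fun r _ => ?_
  simp only [Pi.add_apply, Pi.smul_apply, smul_eq_mul]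
  ring

private lemma eval_hom1_smul {k : Type*} [CommRing k] {σ : Type*} [Fintype σ] [DecidableEq σ]
    (p : MvPolynomial σ k) (hp : p.IsHomogeneous 1) (c : k) (a : σ → k) :
    eval (c • a) p = c * eval a p := by
  have := eval_hom1_lin p hp c 0 a 0
  simpa using this

private lemma eval_hom1_zero {k : Type*} [CommRing k] {σ : Type*} [Fintype σ] [DecidableEq σ]
    (p : MvPolynomial σ k) (hp : p.IsHomogeneous 1) :
    eval (0 : σ → k) p = 0 := by
  have := eval_hom1_smul p hp 0 0
  simpa using this

private lemma aeval_hom1 {k : Type*} [CommSemiring k] {N : ℕ}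
    (p : MvPolynomial (Fin N) k) (hp : p.IsHomogeneous 1) (a b : Fin N → k) :
    aeval (fun r => a r • (X 0 : MvPolynomial (Fin 2) k) + b r • X 1) p
      = eval a p • (X 0 : MvPolynomial (Fin 2) k) + eval b p • X 1 := by
  conv_lhs => rw [hom1_eq_sum p hp]
  rw [map_sum, eval_hom1 p hp a, eval_hom1 p hp b, Finset.sum_smul, Finset.sum_smul,
    ← Finset.sum_add_distrib]
  refine Finset.sum_congr rfl fun r _ => ?_
  rw [smul_eq_C_mul, _root_.map_mul, aeval_C, aeval_X]
  simp [smul_add, smul_smul, Algebra.algebraMap_eq_smul_one, smul_eq_C_mul, mul_add]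
  ring

private lemma exists_eig {k : Type*} [Field k] [IsAlgClosed k] {V : Type*} [AddCommGroup V]
    [Module k V] (x x' y y' : V) (p q r s : k) (hy : p • x + q • x' = y)
    (hy' : r • x + s • x' = y') :
    ∃ (c c' μ : k), ¬(c = 0 ∧ c' = 0) ∧ c • y + c' • y' = μ • (c • x + c' • x') := by
  obtain ⟨μ, hμ⟩ := Module.End.exists_eigenvalue
    (Matrix.mulVecLin (!![p, r; q, s] : Matrix (Fin 2) (Fin 2) k))
  obtain ⟨e, he⟩ := hμ.exists_hasEigenvector
  have heq : (!![p, r; q, s] : Matrix (Fin 2) (Fin 2) k).mulVec e = μ • e :=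
    Module.End.mem_eigenspace_iff.mp he.1
  have he0 : p * e 0 + r * e 1 = μ * e 0 := by
    have := congrFun heq 0
    simpa [Matrix.mulVec, dotProduct, Fin.sum_univ_two] using this
  have he1 : q * e 0 + s * e 1 = μ * e 1 := by
    have := congrFun heq 1
    simpa [Matrix.mulVec, dotProduct, Fin.sum_univ_two] using this
  refine ⟨e 0, e 1, μ, ?_, ?_⟩
  · rintro ⟨h0, h1⟩
    exact he.2 (funext fun i => by fin_cases i <;> simp [h0, h1])
  · rw [← hy, ← hy']
    calc e 0 • (p • x + q • x') + e 1 • (r • x + s • x')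
        = (p * e 0 + r * e 1) • x + (q * e 0 + s * e 1) • x' := by module
      _ = (μ * e 0) • x + (μ * e 1) • x' := by rw [he0, he1]
      _ = μ • (e 0 • x + e 1 • x') := by module

private lemma rank_ne_two {k : Type*} [Field k] {m : ℕ} (M : Matrix (Fin 2) (Fin m) k)
    (α β : k) (hne : ¬(α = 0 ∧ β = 0)) (hrel : ∀ j, α * M 0 j + β * M 1 j = 0) :
    M.rank ≠ 2 := by
  have hv : (Mᵀ).mulVec ![α, β] = 0 := by
    funext j
    have := hrel j
    simp [Matrix.mulVec, dotProduct, Fin.sum_univ_two, Matrix.transpose_apply]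
    linear_combination this
  have hv0 : (![α, β] : Fin 2 → k) ≠ 0 := by
    intro hc
    exact hne ⟨congrFun hc 0, congrFun hc 1⟩
  have hmem : (![α, β] : Fin 2 → k) ∈ LinearMap.ker (Mᵀ).mulVecLin := by
    rw [LinearMap.mem_ker, Matrix.mulVecLin_apply]
    exact hv
  have hker : 0 < Module.finrank k (LinearMap.ker (Mᵀ).mulVecLin) := by
    rw [Module.finrank_pos_iff]
    exact nontrivial_of_ne ⟨_, hmem⟩ 0 (by simpa using hv0)
  have hrn := LinearMap.finrank_range_add_finrank_ker (Mᵀ).mulVecLin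
  rw [Module.finrank_fin_fun] at hrn
  have : (Mᵀ).rank ≤ 1 := by
    unfold Matrix.rank
    omega
  rw [← Matrix.rank_transpose M]
  omega

private lemma final_count {k : Type*} [Field k] {m : ℕ} (T : Matrix (Fin 2 × Fin 2) (Fin m) k)
    (hkg : Module.finrank k (LinearMap.ker (Tᵀ).mulVecLin) = 1) :
    Module.finrank k (LinearMap.ker T.mulVecLin) = m - 3 := by
  have hrnG := LinearMap.finrank_range_add_finrank_ker (Tᵀ).mulVecLin
  have hdim4 : Module.finrank k ((Fin 2 × Fin 2) → k) = 4 := by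
    rw [Module.finrank_fintype_fun_eq_card]; simp
  rw [hdim4, hkg] at hrnG
  have h1 : (Tᵀ).rank = 3 := by unfold Matrix.rank; omega
  have h2 : T.rank = 3 := by rw [← Matrix.rank_transpose T]; exact h1
  unfold Matrix.rank at h2
  have hrn2 := LinearMap.finrank_range_add_finrank_ker (T.mulVecLin)
  rw [Module.finrank_fintype_fun_eq_card, Fintype.card_fin] at hrn2
  omega

/-- With `h i j` linear forms in `k[x₀,…,xₙ]` defining an epimorphism
`ε : mO_{ℙⁿ} → 2O_{ℙⁿ}(1)` (pointwise rank 2), suppose that `H⁰(ε)` is not surjective,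
i.e. there is a pair of linear forms `(q₁, q₂)` not of the form `(Σⱼ h₁ⱼcⱼ, Σⱼ h₂ⱼcⱼ)`
with scalar coefficients `cⱼ`.  Then there is a line `L ⊆ ℙⁿ`, spanned by two linearly
independent vectors `a, b ∈ k^{n+1}`, such that the kernel of the `k`-linear map
`k^m → (k[s,t]₁)²`, `c ↦ (Σⱼ h₁ⱼ(s·a + t·b)·cⱼ, Σⱼ h₂ⱼ(s·a + t·b)·cⱼ)`, has dimension
exactly `m - 3` (so that the kernel bundle `K = Ker ε` restricted to `L` splits as
`(m-3)O_L ⊕ O_L(-2)`; in particular `K(1)` is not globally generated). -/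
theorem stmt_5 {k : Type*} [Field k] [IsAlgClosed k] [CharZero k]
    (n m : ℕ) (hn : 1 ≤ n) (hm : 1 ≤ m)
    (h : Fin 2 → Fin m → MvPolynomial (Fin (n + 1)) k)
    (hdeg : ∀ i j, (h i j).IsHomogeneous 1)
    (hrank : ∀ a : Fin (n + 1) → k, a ≠ 0 →
      (Matrix.of fun i j => MvPolynomial.eval a (h i j)).rank = 2)
    (hH0 : ∃ q : Fin 2 → MvPolynomial (Fin (n + 1)) k, (∀ i, (q i).IsHomogeneous 1) ∧
      ∀ c : Fin m → k, ¬ (∀ i, ∑ j, c j • h i j = q i)) :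
    ∃ a b : Fin (n + 1) → k, LinearIndependent k ![a, b] ∧
      Module.finrank k
        (LinearMap.ker (LinearMap.pi (fun i : Fin 2 =>
          ∑ j : Fin m,
            (LinearMap.toSpanSingleton k (MvPolynomial (Fin 2) k)
              (MvPolynomial.aeval
                (fun r => a r • (MvPolynomial.X 0 : MvPolynomial (Fin 2) k) +
                  b r • MvPolynomial.X 1) (h i j))).comp
            (LinearMap.proj (R := k) (φ := fun _ : Fin m => k) j)))) = m - 3 := by
  classical
  obtain ⟨q, hqdeg, hq⟩ := hH0
  -- Step A: find a functional annihilating the image of H⁰(ε)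
  set w : Fin m → ((Fin 2 × Fin (n + 1)) → k) :=
    fun j p => coeff (Finsupp.single p.2 1) (h p.1 j) with hw
  set qv : (Fin 2 × Fin (n + 1)) → k := fun p => coeff (Finsupp.single p.2 1) (q p.1) with hqv_def
  have hqv : qv ∉ Submodule.span k (Set.range w) := by
    intro hmem
    rw [Submodule.mem_span_range_iff_exists_fun] at hmem
    obtain ⟨c, hc⟩ := hmem
    apply hq c
    intro i
    have key : ∀ r, ∑ j, c j * coeff (Finsupp.single r 1) (h i j)
        = coeff (Finsupp.single r 1) (q i) := by
      intro r
      have := congrFun hc (i, r)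
      simpa [hw, hqv_def, Finset.sum_apply, Pi.smul_apply, smul_eq_mul] using this
    calc ∑ j, c j • h i j
        = ∑ j, c j • ∑ r, coeff (Finsupp.single r 1) (h i j) • X r := by
          refine Finset.sum_congr rfl fun j _ => ?_
          rw [← hom1_eq_sum _ (hdeg i j)]
      _ = ∑ r, (∑ j, c j * coeff (Finsupp.single r 1) (h i j)) • X r := by
          simp only [Finset.smul_sum, smul_smul]
          rw [Finset.sum_comm]
          refine Finset.sum_congr rfl fun r _ => ?_
          rw [Finset.sum_smul]
      _ = ∑ r, coeff (Finsupp.single r 1) (q i) • X r := by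
          refine Finset.sum_congr rfl fun r _ => ?_
          rw [key r]
      _ = q i := (hom1_eq_sum _ (hqdeg i)).symm
  obtain ⟨f, hfw, hfq⟩ : ∃ f : Module.Dual k ((Fin 2 × Fin (n + 1)) → k),
      (∀ j, f (w j) = 0) ∧ f qv ≠ 0 := by
    set S := Submodule.span k (Set.range w) with hS
    have hq0 : S.mkQ qv ≠ 0 := by
      rw [Submodule.mkQ_apply, ne_eq, Submodule.Quotient.mk_eq_zero]
      exact hqv
    obtain ⟨g, hg⟩ : ∃ g : Module.Dual k (_ ⧸ S), g (S.mkQ qv) ≠ 0 := by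
      by_contra hcon
      push_neg at hcon
      exact hq0 ((Module.forall_dual_apply_eq_zero_iff k _).mp hcon)
    refine ⟨g.comp S.mkQ, fun j => ?_, hg⟩
    have hz : S.mkQ (w j) = 0 := by
      rw [Submodule.mkQ_apply, Submodule.Quotient.mk_eq_zero]
      exact Submodule.subset_span (Set.mem_range_self j)
    simp [LinearMap.comp_apply, hz]
  set u : Fin 2 → Fin (n + 1) → k := fun i r => f (Pi.single (i, r) 1) with hu_def
  have hfrep : ∀ x : (Fin 2 × Fin (n + 1)) → k, f x = ∑ p, x p * f (Pi.single p 1) := by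
    intro x
    conv_lhs => rw [← Finset.univ_sum_single x]
    rw [map_sum]
    refine Finset.sum_congr rfl fun p _ => ?_
    rw [← smul_eq_mul, ← LinearMap.map_smul]
    congr 1
    rw [← Pi.single_smul, smul_eq_mul, mul_one]
  have hurel : ∀ j, eval (u 0) (h 0 j) + eval (u 1) (h 1 j) = 0 := by
    intro j
    have h0 := hfw j
    rw [hfrep, Fintype.sum_prod_type, Fin.sum_univ_two] at h0
    rw [eval_hom1 _ (hdeg 0 j), eval_hom1 _ (hdeg 1 j)]
    simpa [hw, hu_def] using h0
  have hune : ¬(u 0 = 0 ∧ u 1 = 0) := by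
    rintro ⟨h0, h1⟩
    apply hfq
    rw [hfrep]
    refine Finset.sum_eq_zero fun p _ => ?_
    have hz : ∀ i : Fin 2, u i = 0 := by intro i; fin_cases i <;> assumption
    have : f (Pi.single p 1) = 0 := by
      have := congrFun (hz p.1) p.2
      simpa [hu_def] using this
    rw [this, mul_zero]
  have hab : LinearIndependent k ![u 0, u 1] := by
    rw [LinearIndependent.pair_iff]
    intro s t hst
    by_contra hcon
    by_cases ht : t = 0
    · subst ht
      have hs : s ≠ 0 := by tauto
      have hu0 : u 0 = 0 := by
        have hz : s • u 0 = 0 := by simpa using hst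
        rcases smul_eq_zero.mp hz with hc | hc
        · exact absurd hc hs
        · exact hc
      have hu1 : u 1 ≠ 0 := fun hc => hune ⟨hu0, hc⟩
      refine rank_ne_two (Matrix.of fun i j => eval (u 1) (h i j)) 0 1 (by simp)
        (fun j => ?_) (hrank (u 1) hu1)
      have := hurel j
      rw [hu0, eval_hom1_zero _ (hdeg 0 j)] at this
      simpa using this
    · have hu1 : u 1 = (-(s/t)) • u 0 := by
        funext r
        have h' := congrFun hst r
        simp only [Pi.add_apply, Pi.smul_apply, smul_eq_mul, Pi.zero_apply] at h'
        show u 1 r = -(s/t) * u 0 r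
        field_simp
        linear_combination h' 
      have hu0 : u 0 ≠ 0 := fun hc => hune ⟨hc, by rw [hu1, hc, smul_zero]⟩
      refine rank_ne_two (Matrix.of fun i j => eval (u 0) (h i j)) 1 (-(s/t)) (by simp)
        (fun j => ?_) (hrank (u 0) hu0)
      have := hurel j
      rw [hu1, eval_hom1_smul _ (hdeg 1 j)] at this
      simpa using this
  refine ⟨u 0, u 1, hab, ?_⟩
  -- Step B: analyze the restriction to the line
  set T : Matrix (Fin 2 × Fin 2) (Fin m) k :=
    Matrix.of fun p j => eval (u p.2) (h p.1 j) with hT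
  set ι : ((Fin 2 × Fin 2) → k) →ₗ[k] (Fin 2 → MvPolynomial (Fin 2) k) :=
    LinearMap.pi (fun i =>
      (LinearMap.toSpanSingleton k (MvPolynomial (Fin 2) k) (X 0)).comp
        (LinearMap.proj (i, (0 : Fin 2)))
      + (LinearMap.toSpanSingleton k (MvPolynomial (Fin 2) k) (X 1)).comp
        (LinearMap.proj (i, (1 : Fin 2)))) with hι_def
  have hι : LinearMap.ker ι = ⊥ := by
    rw [LinearMap.ker_eq_bot']
    intro y hy
    funext p
    obtain ⟨i, w'⟩ := p
    have hyi := congrFun hy i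
    simp only [hι_def, LinearMap.pi_apply, LinearMap.add_apply, LinearMap.comp_apply,
      LinearMap.proj_apply, LinearMap.toSpanSingleton_apply, Pi.zero_apply] at hyi
    have h0 := congrArg (coeff (Finsupp.single (0 : Fin 2) 1)) hyi
    have h1 := congrArg (coeff (Finsupp.single (1 : Fin 2) 1)) hyi
    simp only [coeff_add, coeff_smul, coeff_X', smul_eq_mul, coeff_zero,
      Finsupp.single_eq_single_iff] at h0 h1
    norm_num at h0 h1
    fin_cases w' <;> simp [h0, h1]
  have hΦ : (LinearMap.pi (fun i : Fin 2 =>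
          ∑ j : Fin m,
            (LinearMap.toSpanSingleton k (MvPolynomial (Fin 2) k)
              (MvPolynomial.aeval
                (fun r => u 0 r • (MvPolynomial.X 0 : MvPolynomial (Fin 2) k) +
                  u 1 r • MvPolynomial.X 1) (h i j))).comp
            (LinearMap.proj (R := k) (φ := fun _ : Fin m => k) j)))
      = ι.comp T.mulVecLin := by
    apply LinearMap.ext
    intro c
    funext i
    simp only [LinearMap.pi_apply, LinearMap.coe_sum, Finset.sum_apply, LinearMap.comp_apply,
      LinearMap.proj_apply, LinearMap.toSpanSingleton_apply, Matrix.mulVecLin_apply, hι_def,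
      LinearMap.add_apply]
    calc ∑ j, c j • aeval
          (fun r => u 0 r • (X 0 : MvPolynomial (Fin 2) k) + u 1 r • X 1) (h i j)
        = ∑ j, (c j • (eval (u 0) (h i j) • (X 0 : MvPolynomial (Fin 2) k))
            + c j • (eval (u 1) (h i j) • X 1)) := by
          refine Finset.sum_congr rfl fun j _ => ?_
          rw [aeval_hom1 _ (hdeg i j), smul_add]
      _ = (∑ j, T (i, 0) j * c j) • (X 0 : MvPolynomial (Fin 2) k)
            + (∑ j, T (i, 1) j * c j) • X 1 := by
          rw [Finset.sum_add_distrib, Finset.sum_smul, Finset.sum_smul]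
          congr 1 <;> refine Finset.sum_congr rfl fun j _ => ?_ <;>
            simp [hT, smul_smul, mul_comm]
      _ = _ := by
          simp [Matrix.mulVec, dotProduct]
  rw [hΦ, LinearMap.ker_comp, hι, Submodule.comap_bot]
  -- left kernel of T has dimension 1
  set g := (Tᵀ).mulVecLin with hg_def
  have hrnG := LinearMap.finrank_range_add_finrank_ker g
  have hdim4 : Module.finrank k ((Fin 2 × Fin 2) → k) = 4 := by
    rw [Module.finrank_fintype_fun_eq_card]
    simp
  rw [hdim4] at hrnG
  have hker_ge : 1 ≤ Module.finrank k (LinearMap.ker g) := by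
    set ρ : (Fin 2 × Fin 2) → k := fun p => if p.1 = p.2 then 1 else 0 with hρ_def
    have hρmem : ρ ∈ LinearMap.ker g := by
      rw [LinearMap.mem_ker]
      funext j
      have := hurel j
      simp only [hg_def, Matrix.mulVecLin_apply, Matrix.mulVec, dotProduct,
        Fintype.sum_prod_type, Fin.sum_univ_two, hρ_def, Matrix.transpose_apply, hT,
        Matrix.of_apply, Pi.zero_apply]
      norm_num
      linear_combination this
    have hρ0 : ρ ≠ 0 := fun hc => by simpa [hρ_def] using congrFun hc (0, 0)
    rw [Nat.one_le_iff_ne_zero, ← Nat.pos_iff_ne_zero, Module.finrank_pos_iff]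
    exact nontrivial_of_ne ⟨_, hρmem⟩ 0 (by simpa using hρ0)
  have hker_le : Module.finrank k (LinearMap.ker g) ≤ 1 := by
    by_contra hcon
    push_neg at hcon
    obtain ⟨fv, hfv⟩ := exists_linearIndependent_of_le_finrank
      (R := k) (M := LinearMap.ker g) (n := 2) (by omega)
    have hfv' : LinearIndependent k (fun i : Fin 2 => ((fv i : (Fin 2 × Fin 2) → k))) :=
      hfv.map' (LinearMap.ker g).subtype (Submodule.ker_subtype _)
    set v : (Fin 2 × Fin 2) → k := (fv 0 : (Fin 2 × Fin 2) → k) with hv_def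
    set v' : (Fin 2 × Fin 2) → k := (fv 1 : (Fin 2 × Fin 2) → k) with hv'_def
    have hvind : ∀ c c' : k, c • v + c' • v' = 0 → c = 0 ∧ c' = 0 := by
      intro c c' hcc
      have := Fintype.linearIndependent_iff.mp hfv' ![c, c'] ?_
      · exact ⟨this 0, this 1⟩
      · rw [Fin.sum_univ_two]
        simpa using hcc
    set Av : ((Fin 2 × Fin 2) → k) → (Fin (n + 1) → k) :=
      fun x => x (0, 0) • u 0 + x (0, 1) • u 1 with hAv_def
    set Bv : ((Fin 2 × Fin 2) → k) → (Fin (n + 1) → k) :=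
      fun x => x (1, 0) • u 0 + x (1, 1) • u 1 with hBv_def
    have hAlin : ∀ (c c' : k) x x', Av (c • x + c' • x') = c • Av x + c' • Av x' := by
      intro c c' x x'
      simp only [hAv_def, Pi.add_apply, Pi.smul_apply, smul_eq_mul]
      module
    have hBlin : ∀ (c c' : k) x x', Bv (c • x + c' • x') = c • Bv x + c' • Bv x' := by
      intro c c' x x'
      simp only [hBv_def, Pi.add_apply, Pi.smul_apply, smul_eq_mul]
      module
    have hrelk : ∀ x, x ∈ LinearMap.ker g → ∀ j,
        eval (Av x) (h 0 j) + eval (Bv x) (h 1 j) = 0 := by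
      intro x hx j
      have hx' := congrFun (LinearMap.mem_ker.mp hx) j
      simp only [hg_def, Matrix.mulVecLin_apply, Matrix.mulVec, dotProduct,
        Fintype.sum_prod_type, Fin.sum_univ_two, Matrix.transpose_apply, hT,
        Matrix.of_apply, Pi.zero_apply] at hx'
      rw [hAv_def, hBv_def]
      rw [eval_hom1_lin _ (hdeg 0 j), eval_hom1_lin _ (hdeg 1 j)]
      linear_combination hx'
    have hABinj : ∀ x, Av x = 0 → Bv x = 0 → x = 0 := by
      intro x hA hB
      have hp := LinearIndependent.pair_iff.mp hab
      obtain ⟨h1, h2⟩ := hp _ _ hA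
      obtain ⟨h3, h4⟩ := hp _ _ hB
      funext p
      obtain ⟨i, w'⟩ := p
      fin_cases i <;> fin_cases w' <;> assumption
    have hvmem : v ∈ LinearMap.ker g := (fv 0).2
    have hv'mem : v' ∈ LinearMap.ker g := (fv 1).2
    by_cases hAx : LinearIndependent k ![Av v, Av v']
    · by_cases hBx : LinearIndependent k ![Bv v, Bv v']
      · -- eigen case
        have hspan : Submodule.span k {Av v, Av v'} = Submodule.span k {u 0, u 1} := by
          apply Submodule.eq_of_le_of_finrank_le
          · rw [Submodule.span_le]
            rintro z hz
            rcases hz with rfl | hz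
            · exact Submodule.mem_span_pair.mpr ⟨_, _, rfl⟩
            · rcases hz with rfl
              exact Submodule.mem_span_pair.mpr ⟨_, _, rfl⟩
          · have h1 : Module.finrank k (Submodule.span k {Av v, Av v'}) = 2 := by
              have := finrank_span_eq_card hAx
              rwa [Matrix.range_cons_cons_empty] at this
            have h2 : Module.finrank k (Submodule.span k ({u 0, u 1} : Set (Fin (n+1) → k))) = 2 := by
              have := finrank_span_eq_card hab
              rwa [Matrix.range_cons_cons_empty] at this
            omega
        have hymem : Bv v ∈ Submodule.span k {Av v, Av v'} := by
          rw [hspan]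
          exact Submodule.mem_span_pair.mpr ⟨_, _, rfl⟩
        have hy'mem : Bv v' ∈ Submodule.span k {Av v, Av v'} := by
          rw [hspan]
          exact Submodule.mem_span_pair.mpr ⟨_, _, rfl⟩
        obtain ⟨pc, qc, hy⟩ := Submodule.mem_span_pair.mp hymem
        obtain ⟨rc, sc, hy'⟩ := Submodule.mem_span_pair.mp hy'mem
        obtain ⟨c, c', μ, hne, hkey⟩ := exists_eig (Av v) (Av v') (Bv v) (Bv v') pc qc rc sc hy hy'
        have hwv0 : c • Av v + c' • Av v' ≠ 0 := by
          intro hc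
          have hz := LinearIndependent.pair_iff.mp hAx _ _ hc
          exact hne ⟨hz.1, hz.2⟩
        have hx''mem : c • v + c' • v' ∈ LinearMap.ker g :=
          Submodule.add_mem _ (Submodule.smul_mem _ _ hvmem) (Submodule.smul_mem _ _ hv'mem)
        have hAx'' : Av (c • v + c' • v') = c • Av v + c' • Av v' := hAlin c c' v v'
        have hBx'' : Bv (c • v + c' • v') = μ • (c • Av v + c' • Av v') := by
          rw [hBlin]; exact hkey
        have hr := hrelk _ hx''mem
        refine rank_ne_two (Matrix.of fun i j => eval (c • Av v + c' • Av v') (h i j)) 1 μ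
          (by simp) (fun j => ?_) (hrank _ hwv0)
        have := hr j
        rw [hAx'', hBx'', eval_hom1_smul _ (hdeg 1 j)] at this
        simpa using this
      · -- Bv's dependent
        rw [LinearIndependent.pair_iff] at hBx
        push_neg at hBx
        obtain ⟨c, c', hcc, hne⟩ := hBx
        set x'' := c • v + c' • v' with hx''_def
        have hx''mem : x'' ∈ LinearMap.ker g :=
          Submodule.add_mem _ (Submodule.smul_mem _ _ hvmem) (Submodule.smul_mem _ _ hv'mem)
        have hBx'' : Bv x'' = 0 := by rw [hx''_def, hBlin]; exact hcc
        have hAx''ne : Av x'' ≠ 0 := by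
          intro hc
          have hz0 : c • v + c' • v' = 0 := by rw [← hx''_def]; exact hABinj x'' hc hBx''
          have hz := hvind c c' hz0
          exact hne hz.1 hz.2
        have hr := hrelk x'' hx''mem
        refine rank_ne_two (Matrix.of fun i j => eval (Av x'') (h i j)) 1 0 (by simp)
          (fun j => ?_) (hrank _ hAx''ne)
        have := hr j
        rw [hBx'', eval_hom1_zero _ (hdeg 1 j)] at this
        simpa using this
    · -- Av's dependent
      rw [LinearIndependent.pair_iff] at hAx
      push_neg at hAx
      obtain ⟨c, c', hcc, hne⟩ := hAx
      set x'' := c • v + c' • v' with hx''_def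
      have hx''mem : x'' ∈ LinearMap.ker g :=
        Submodule.add_mem _ (Submodule.smul_mem _ _ hvmem) (Submodule.smul_mem _ _ hv'mem)
      have hAx'' : Av x'' = 0 := by rw [hx''_def, hAlin]; exact hcc
      have hBx''ne : Bv x'' ≠ 0 := by
        intro hc
        have hz0 : c • v + c' • v' = 0 := by rw [← hx''_def]; exact hABinj x'' hAx'' hc
        have hz := hvind c c' hz0
        exact hne hz.1 hz.2
      have hr := hrelk x'' hx''mem
      refine rank_ne_two (Matrix.of fun i j => eval (Bv x'') (h i j)) 0 1 (by simp)
        (fun j => ?_) (hrank _ hBx''ne)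
      have := hr j
      rw [hAx'', eval_hom1_zero _ (hdeg 0 j)] at this
      simpa using this
  -- conclude
  have hkg : Module.finrank k (LinearMap.ker g) = 1 := le_antisymm hker_le hker_ge
  rw [hg_def] at hkg
  exact final_count T hkg
end

section
/- Let S = k[x₀,x₁,x₂] with k a field of characteristic 0. The k-linear map Φ : S₂ ⊗_k S₁ → S₁ ⊗_k S₂ determined by Φ(ℓ₁ℓ₂ ⊗ w) = ℓ₁ ⊗ ℓ₂w + ℓ₂ ⊗ ℓ₁w for linear forms ℓ₁, ℓ₂, w (equivalently, Φ(f ⊗ g) = Σ_{i=0}^{2} x_i ⊗ (∂f/∂x_i)·g for f ∈ S₂, g ∈ S₁) is surjective; since both sides have dimension 18, it is bijective. In particular, there exists a 3×6 matrix of linear forms in three variables for which the induced k-linear map (S₁)⁶ → (S₂)³ is bijective (i.e., a morphism η : 6O_{ℙ²} → 3O_{ℙ²}(1) with H⁰(η(1)) bijective). -/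
open MvPolynomial TensorProduct

/-- The product of two linear forms, as an element of the space `S₂` of quadratic forms. -/
noncomputable def linMul {k : Type*} [Field k]
    (f g : MvPolynomial.homogeneousSubmodule (Fin 3) k 1) :
    MvPolynomial.homogeneousSubmodule (Fin 3) k 2 :=
  ⟨f.1 * g.1,
    (MvPolynomial.mem_homogeneousSubmodule 2 _).2
      (((MvPolynomial.mem_homogeneousSubmodule 1 _).1 f.2).mul
        ((MvPolynomial.mem_homogeneousSubmodule 1 _).1 g.2))⟩

set_option maxHeartbeats 1000000
set_option synthInstance.maxHeartbeats 400000

namespace Stmt11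

variable (k : Type*) [Field k]

noncomputable def e (i : Fin 3) : MvPolynomial.homogeneousSubmodule (Fin 3) k 1 :=
  ⟨X i, isHomogeneous_X k i⟩

def pair : Fin 6 → Fin 3 × Fin 3
  | 0 => (0,0) | 1 => (0,1) | 2 => (0,2) | 3 => (1,1) | 4 => (1,2) | 5 => (2,2)

noncomputable def f (j : Fin 6) : MvPolynomial.homogeneousSubmodule (Fin 3) k 2 :=
  linMul (e k (pair j).1) (e k (pair j).2)

noncomputable def dd (j : Fin 6) : Fin 3 →₀ ℕ :=
  Finsupp.single (pair j).1 1 + Finsupp.single (pair j).2 1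

def dmat : Fin 6 → Fin 3 → ℕ
  | 0 => ![2,0,0] | 1 => ![1,1,0] | 2 => ![1,0,1] | 3 => ![0,2,0] | 4 => ![0,1,1] | 5 => ![0,0,2]

lemma dd_apply (j : Fin 6) (a : Fin 3) : dd j a = dmat j a := by
  fin_cases j <;> fin_cases a <;>
    simp [dd, pair, dmat, Finsupp.single_apply]

lemma degree_eq (d : Fin 3 →₀ ℕ) : d.degree = d 0 + d 1 + d 2 := by
  have : d.degree = ∑ i : Fin 3, d i := by
    rw [Finsupp.degree]
    exact Finset.sum_subset (Finset.subset_univ _)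
      (fun x _ hx => Finsupp.notMem_support_iff.1 hx)
  rw [this, Fin.sum_univ_three]

lemma deg1 (d : Fin 3 →₀ ℕ) (h : d.degree = 1) : ∃ i, d = Finsupp.single i 1 := by
  rw [degree_eq] at h
  rcases Nat.eq_zero_or_pos (d 0) with h0 | h0
  · rcases Nat.eq_zero_or_pos (d 1) with h1 | h1
    · exact ⟨2, Finsupp.ext fun a => by fin_cases a <;> simp [Finsupp.single_apply] <;> omega⟩
    · exact ⟨1, Finsupp.ext fun a => by fin_cases a <;> simp [Finsupp.single_apply] <;> omega⟩
  · exact ⟨0, Finsupp.ext fun a => by fin_cases a <;> simp [Finsupp.single_apply] <;> omega⟩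

lemma deg2 (d : Fin 3 →₀ ℕ) (h : d.degree = 2) : ∃ j, d = dd j := by
  rw [degree_eq] at h
  have key : ∀ j : Fin 6, (∀ a, d a = dd j a) → ∃ j, d = dd j :=
    fun j hj => ⟨j, Finsupp.ext hj⟩
  have hc : ∀ j : Fin 6, (∀ a, d a = dmat j a) → ∃ j, d = dd j :=
    fun j hj => key j (fun a => by rw [dd_apply]; exact hj a)
  by_cases h0 : d 0 = 2
  · exact hc 0 fun a => by fin_cases a <;> simp [dmat] <;> omega
  by_cases h1 : d 0 = 1 ∧ d 1 = 1
  · exact hc 1 fun a => by fin_cases a <;> simp [dmat] <;> omega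
  by_cases h2 : d 0 = 1
  · exact hc 2 fun a => by fin_cases a <;> simp [dmat] <;> omega
  by_cases h3 : d 1 = 2
  · exact hc 3 fun a => by fin_cases a <;> simp [dmat] <;> omega
  by_cases h4 : d 1 = 1
  · exact hc 4 fun a => by fin_cases a <;> simp [dmat] <;> omega
  · exact hc 5 fun a => by fin_cases a <;> simp [dmat] <;> omega

lemma dd_inj : Function.Injective (dd) := by
  intro j j' h
  have h0 := DFunLike.congr_fun h 0
  have h1 := DFunLike.congr_fun h 1
  have h2 := DFunLike.congr_fun h 2
  rw [dd_apply, dd_apply] at h0 h1 h2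
  fin_cases j <;> fin_cases j' <;> simp [dmat] at h0 h1 h2 <;> rfl

lemma f_poly (j : Fin 6) : ((f k j : MvPolynomial (Fin 3) k)) = monomial (dd j) 1 := by
  rw [f, linMul, dd]
  simp only [e]
  rw [X, X, monomial_mul, one_mul]

lemma coeff_f (m : Fin 3 →₀ ℕ) (j : Fin 6) :
    coeff m (f k j : MvPolynomial (Fin 3) k) = if m = dd j then 1 else 0 := by
  rw [f_poly, coeff_monomial]; simp [eq_comm]

lemma coeff_e (m : Fin 3 →₀ ℕ) (i : Fin 3) :
    coeff m (e k i : MvPolynomial (Fin 3) k) = if m = Finsupp.single i 1 then 1 else 0 := by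
  rw [e, coeff_X']; simp [eq_comm]

lemma sum1 (p : MvPolynomial.homogeneousSubmodule (Fin 3) k 1) :
    ∑ i, coeff (Finsupp.single i 1) (p : MvPolynomial (Fin 3) k) • (e k i : MvPolynomial (Fin 3) k)
      = (p : MvPolynomial (Fin 3) k) := by
  ext m
  rw [coeff_sum]
  simp only [coeff_smul, coeff_e, smul_eq_mul, mul_ite, mul_one, mul_zero]
  by_cases hm : ∃ i, m = Finsupp.single i 1
  · obtain ⟨i, rfl⟩ := hm
    rw [Finset.sum_eq_single i]
    · simp
    · intro b _ hb
      simp only [ite_eq_right_iff]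
      intro hh
      exact (hb ((Finsupp.single_left_inj one_ne_zero).1 hh.symm)).elim
    · simp
  · have h1 : coeff m (p : MvPolynomial (Fin 3) k) = 0 := by
      by_contra hc
      have := ((mem_homogeneousSubmodule 1 _).1 p.2)
      have hd : m.degree = 1 := by
        rw [Finsupp.degree_eq_weight_one]; exact this hc
      exact hm (deg1 m hd)
    rw [h1, Finset.sum_eq_zero]
    intro i _
    rw [if_neg (fun hh => hm ⟨i, hh⟩)]

lemma sum2 (p : MvPolynomial.homogeneousSubmodule (Fin 3) k 2) :
    ∑ j, coeff (dd j) (p : MvPolynomial (Fin 3) k) • (f k j : MvPolynomial (Fin 3) k)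
      = (p : MvPolynomial (Fin 3) k) := by
  ext m
  rw [coeff_sum]
  simp only [coeff_smul, coeff_f, smul_eq_mul, mul_ite, mul_one, mul_zero]
  by_cases hm : ∃ j, m = dd j
  · obtain ⟨j, rfl⟩ := hm
    rw [Finset.sum_eq_single j]
    · simp
    · intro b _ hb
      simp only [ite_eq_right_iff]
      intro hh
      exact (hb (dd_inj hh.symm)).elim
    · simp
  · have h1 : coeff m (p : MvPolynomial (Fin 3) k) = 0 := by
      by_contra hc
      have := ((mem_homogeneousSubmodule 2 _).1 p.2)
      refine hm (deg2 m ?_)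
      rw [Finsupp.degree_eq_weight_one]; exact this hc
    rw [h1, Finset.sum_eq_zero]
    intro j _
    rw [if_neg (fun hh => hm ⟨j, hh⟩)]

noncomputable def φ1 : MvPolynomial.homogeneousSubmodule (Fin 3) k 1 →ₗ[k] (Fin 3 → k) :=
  LinearMap.pi fun i => (lcoeff k (Finsupp.single i 1)).comp (Submodule.subtype _)

noncomputable def ψ1 : (Fin 3 → k) →ₗ[k] MvPolynomial.homogeneousSubmodule (Fin 3) k 1 :=
  ∑ i, (LinearMap.proj i).smulRight (e k i)

noncomputable def E1 : MvPolynomial.homogeneousSubmodule (Fin 3) k 1 ≃ₗ[k] (Fin 3 → k) :=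
  LinearEquiv.ofLinear (φ1 k) (ψ1 k)
    (by
      refine LinearMap.ext fun c => funext fun i => ?_
      simp only [LinearMap.coe_comp, Function.comp_apply, LinearMap.id_coe, id_eq,
        φ1, ψ1, LinearMap.pi_apply, LinearMap.coe_sum, Finset.sum_apply,
        LinearMap.smulRight_apply, LinearMap.proj_apply, lcoeff_apply]
      rw [map_sum, coeff_sum]
      simp only [map_smul, Submodule.coe_smul, Submodule.subtype_apply, coeff_smul, coeff_e,
        smul_eq_mul, mul_ite, mul_one, mul_zero]
      rw [Finset.sum_eq_single i]
      · simp
      · intro b _ hb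
        rw [if_neg]
        intro hh
        exact hb ((Finsupp.single_left_inj one_ne_zero).1 hh).symm
      · simp
      )
    (by
      refine LinearMap.ext fun p => Subtype.ext ?_
      simp only [LinearMap.coe_comp, Function.comp_apply, LinearMap.id_coe, id_eq,
        φ1, ψ1, LinearMap.pi_apply, LinearMap.coe_sum, Finset.sum_apply,
        LinearMap.smulRight_apply, LinearMap.proj_apply, Submodule.coe_sum,
        Submodule.coe_smul, lcoeff_apply, LinearMap.coe_comp, Submodule.coe_subtype]
      exact sum1 k p)

noncomputable def b1 : Module.Basis (Fin 3) k (MvPolynomial.homogeneousSubmodule (Fin 3) k 1) :=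
  Module.Basis.ofEquivFun (E1 k)

lemma b1_apply (i : Fin 3) : b1 k i = e k i := by
  rw [b1, Module.Basis.coe_ofEquivFun]
  apply (E1 k).injective
  rw [LinearEquiv.apply_symm_apply]
  funext a
  simp only [E1, LinearEquiv.ofLinear_apply, φ1, LinearMap.pi_apply, LinearMap.coe_comp,
    Function.comp_apply, Submodule.coe_subtype, lcoeff_apply, coeff_e]
  rw [Pi.single_apply]
  by_cases h : a = i
  · subst h; simp
  · rw [if_neg h, if_neg]
    intro hh
    exact h ((Finsupp.single_left_inj one_ne_zero).1 hh)


noncomputable def φ2 : MvPolynomial.homogeneousSubmodule (Fin 3) k 2 →ₗ[k] (Fin 6 → k) :=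
  LinearMap.pi fun j => (lcoeff k (dd j)).comp (Submodule.subtype _)

noncomputable def ψ2 : (Fin 6 → k) →ₗ[k] MvPolynomial.homogeneousSubmodule (Fin 3) k 2 :=
  ∑ j, (LinearMap.proj j).smulRight (f k j)

noncomputable def E2 : MvPolynomial.homogeneousSubmodule (Fin 3) k 2 ≃ₗ[k] (Fin 6 → k) :=
  LinearEquiv.ofLinear (φ2 k) (ψ2 k)
    (by
      refine LinearMap.ext fun c => funext fun j => ?_
      simp only [LinearMap.coe_comp, Function.comp_apply, LinearMap.id_coe, id_eq,
        φ2, ψ2, LinearMap.pi_apply, LinearMap.coe_sum, Finset.sum_apply,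
        LinearMap.smulRight_apply, LinearMap.proj_apply, lcoeff_apply]
      rw [map_sum, coeff_sum]
      simp only [map_smul, Submodule.coe_smul, Submodule.subtype_apply, coeff_smul, coeff_f,
        smul_eq_mul, mul_ite, mul_one, mul_zero]
      rw [Finset.sum_eq_single j]
      · simp
      · intro b _ hb
        rw [if_neg]
        intro hh
        exact hb (dd_inj hh).symm
      · simp
      )
    (by
      refine LinearMap.ext fun p => Subtype.ext ?_
      simp only [LinearMap.coe_comp, Function.comp_apply, LinearMap.id_coe, id_eq,
        φ2, ψ2, LinearMap.pi_apply, LinearMap.coe_sum, Finset.sum_apply,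
        LinearMap.smulRight_apply, LinearMap.proj_apply, Submodule.coe_sum,
        Submodule.coe_smul, lcoeff_apply, Submodule.coe_subtype]
      exact sum2 k p)

noncomputable def b2 : Module.Basis (Fin 6) k (MvPolynomial.homogeneousSubmodule (Fin 3) k 2) :=
  Module.Basis.ofEquivFun (E2 k)

lemma b2_apply (j : Fin 6) : b2 k j = f k j := by
  rw [b2, Module.Basis.coe_ofEquivFun]
  apply (E2 k).injective
  rw [LinearEquiv.apply_symm_apply]
  funext b
  simp only [E2, LinearEquiv.ofLinear_apply, φ2, LinearMap.pi_apply, LinearMap.coe_comp,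
    Function.comp_apply, Submodule.coe_subtype, lcoeff_apply, coeff_f]
  rw [Pi.single_apply]
  by_cases h : b = j
  · subst h; simp
  · rw [if_neg h, if_neg]
    intro hh
    exact h (dd_inj hh)

instance : FiniteDimensional k (MvPolynomial.homogeneousSubmodule (Fin 3) k 1) :=
  Module.Finite.of_basis (b1 k)

instance : FiniteDimensional k (MvPolynomial.homogeneousSubmodule (Fin 3) k 2) :=
  Module.Finite.of_basis (b2 k)

lemma finrank1 : Module.finrank k (MvPolynomial.homogeneousSubmodule (Fin 3) k 1) = 3 := by
  rw [Module.finrank_eq_card_basis (b1 k), Fintype.card_fin]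

lemma finrank2 : Module.finrank k (MvPolynomial.homogeneousSubmodule (Fin 3) k 2) = 6 := by
  rw [Module.finrank_eq_card_basis (b2 k), Fintype.card_fin]

lemma linMul_comm (u v : MvPolynomial.homogeneousSubmodule (Fin 3) k 1) :
    linMul u v = linMul v u := Subtype.ext (mul_comm _ _)

lemma linMul_add_left (u v w : MvPolynomial.homogeneousSubmodule (Fin 3) k 1) :
    linMul (u + v) w = linMul u w + linMul v w := Subtype.ext (add_mul _ _ _)

lemma linMul_zero_left (w : MvPolynomial.homogeneousSubmodule (Fin 3) k 1) :
    linMul 0 w = 0 := Subtype.ext (zero_mul _)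

noncomputable def hpoly (i : Fin 3) (j : Fin 6) : MvPolynomial (Fin 3) k :=
  (if i = (pair j).1 then X (pair j).2 else 0) + (if i = (pair j).2 then X (pair j).1 else 0)

lemma hpoly_hom (i : Fin 3) (j : Fin 6) : (hpoly k i j).IsHomogeneous 1 := by
  apply MvPolynomial.IsHomogeneous.add <;> split_ifs <;>
    first
      | exact isHomogeneous_X k _
      | exact isHomogeneous_zero _ _ _

noncomputable def hm (i : Fin 3) (j : Fin 6) : MvPolynomial.homogeneousSubmodule (Fin 3) k 1 :=
  ⟨hpoly k i j, hpoly_hom k i j⟩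

lemma hm_eq (i : Fin 3) (j : Fin 6) :
    hm k i j = (if i = (pair j).1 then e k (pair j).2 else 0)
      + (if i = (pair j).2 then e k (pair j).1 else 0) := by
  apply Subtype.ext
  simp only [hm, hpoly, Submodule.coe_add]
  congr 1 <;> split_ifs <;> simp [e]

section Phi

variable {k}
variable (Φ : (MvPolynomial.homogeneousSubmodule (Fin 3) k 2 ⊗[k]
          MvPolynomial.homogeneousSubmodule (Fin 3) k 1) →ₗ[k]
         (MvPolynomial.homogeneousSubmodule (Fin 3) k 1 ⊗[k]
          MvPolynomial.homogeneousSubmodule (Fin 3) k 2))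
    (hΦ : ∀ ℓ₁ ℓ₂ w : MvPolynomial.homogeneousSubmodule (Fin 3) k 1,
      Φ (linMul ℓ₁ ℓ₂ ⊗ₜ[k] w) = ℓ₁ ⊗ₜ[k] linMul ℓ₂ w + ℓ₂ ⊗ₜ[k] linMul ℓ₁ w)

include hΦ in
lemma Phi_f (j : Fin 6) (w : MvPolynomial.homogeneousSubmodule (Fin 3) k 1) :
    Φ (f k j ⊗ₜ[k] w) = ∑ i, e k i ⊗ₜ[k] linMul (hm k i j) w := by
  rw [f, hΦ]
  have expand : ∀ i, e k i ⊗ₜ[k] linMul (hm k i j) w =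
      (if i = (pair j).1 then e k i ⊗ₜ[k] linMul (e k (pair j).2) w else 0)
      + (if i = (pair j).2 then e k i ⊗ₜ[k] linMul (e k (pair j).1) w else 0) := by
    intro i
    rw [hm_eq, linMul_add_left, tmul_add]
    congr 1 <;> split_ifs <;> simp [linMul_zero_left, tmul_zero]
  rw [Finset.sum_congr rfl fun i _ => expand i, Finset.sum_add_distrib,
    Finset.sum_ite_eq' Finset.univ (pair j).1, Finset.sum_ite_eq' Finset.univ (pair j).2]
  simp

end Phi

noncomputable def A : (Fin 6 → MvPolynomial.homogeneousSubmodule (Fin 3) k 1) →ₗ[k]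
    (MvPolynomial.homogeneousSubmodule (Fin 3) k 2 ⊗[k]
     MvPolynomial.homogeneousSubmodule (Fin 3) k 1) :=
  ∑ j, (TensorProduct.mk k _ _ (f k j)).comp (LinearMap.proj j)

lemma A_apply (u : Fin 6 → MvPolynomial.homogeneousSubmodule (Fin 3) k 1) :
    A k u = ∑ j, f k j ⊗ₜ[k] u j := by
  simp [A, TensorProduct.mk_apply]

noncomputable def B : (Fin 3 → MvPolynomial.homogeneousSubmodule (Fin 3) k 2) →ₗ[k]
    (MvPolynomial.homogeneousSubmodule (Fin 3) k 1 ⊗[k]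
     MvPolynomial.homogeneousSubmodule (Fin 3) k 2) :=
  ∑ i, (TensorProduct.mk k _ _ (e k i)).comp (LinearMap.proj i)

lemma B_apply (v : Fin 3 → MvPolynomial.homogeneousSubmodule (Fin 3) k 2) :
    B k v = ∑ i, e k i ⊗ₜ[k] v i := by
  simp [B, TensorProduct.mk_apply]

lemma A_repr (u : Fin 6 → MvPolynomial.homogeneousSubmodule (Fin 3) k 1) (j : Fin 6) (i : Fin 3) :
    ((b2 k).tensorProduct (b1 k)).repr (A k u) (j, i) = (b1 k).repr (u j) i := by
  rw [A_apply, map_sum]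
  rw [Finsupp.finset_sum_apply]
  rw [Finset.sum_eq_single j]
  · rw [Module.Basis.tensorProduct_repr_tmul_apply, ← b2_apply, Module.Basis.repr_self,
      Finsupp.single_eq_same, smul_eq_mul, mul_one]
  · intro b _ hb
    rw [Module.Basis.tensorProduct_repr_tmul_apply, ← b2_apply, Module.Basis.repr_self,
      Finsupp.single_eq_of_ne hb.symm, smul_zero]
  · simp

lemma B_repr (v : Fin 3 → MvPolynomial.homogeneousSubmodule (Fin 3) k 2) (i : Fin 3) (j : Fin 6) :
    ((b1 k).tensorProduct (b2 k)).repr (B k v) (i, j) = (b2 k).repr (v i) j := by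
  rw [B_apply, map_sum]
  rw [Finsupp.finset_sum_apply]
  rw [Finset.sum_eq_single i]
  · rw [Module.Basis.tensorProduct_repr_tmul_apply, ← b1_apply, Module.Basis.repr_self,
      Finsupp.single_eq_same, smul_eq_mul, mul_one]
  · intro b _ hb
    rw [Module.Basis.tensorProduct_repr_tmul_apply, ← b1_apply, Module.Basis.repr_self,
      Finsupp.single_eq_of_ne hb.symm, smul_zero]
  · simp

lemma A_inj : Function.Injective (A k) := by
  intro u u' h
  funext j
  apply (b1 k).repr.injective
  ext i
  rw [← A_repr, ← A_repr, h]

lemma B_inj : Function.Injective (B k) := by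
  intro v v' h
  funext i
  apply (b2 k).repr.injective
  ext j
  rw [← B_repr, ← B_repr, h]

lemma A_surj : Function.Surjective (A k) := by
  intro t
  set br := (b2 k).tensorProduct (b1 k) with hbr
  refine ⟨fun j => ∑ i, br.repr t (j, i) • e k i, ?_⟩
  rw [A_apply]
  have : ∀ j : Fin 6, f k j ⊗ₜ[k] (∑ i, br.repr t (j, i) • e k i)
      = ∑ i, br.repr t (j, i) • (f k j ⊗ₜ[k] e k i) := by
    intro j
    rw [tmul_sum]
    exact Finset.sum_congr rfl fun i _ => by rw [tmul_smul]
  rw [Finset.sum_congr rfl fun j _ => this j]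
  conv_rhs => rw [← Module.Basis.sum_repr br t]
  rw [Fintype.sum_prod_type]
  refine Finset.sum_congr rfl fun j _ => Finset.sum_congr rfl fun i _ => ?_
  rw [hbr, Module.Basis.tensorProduct_apply, b2_apply, b1_apply]

section Phi2

variable {k}
variable (Φ : (MvPolynomial.homogeneousSubmodule (Fin 3) k 2 ⊗[k]
          MvPolynomial.homogeneousSubmodule (Fin 3) k 1) →ₗ[k]
         (MvPolynomial.homogeneousSubmodule (Fin 3) k 1 ⊗[k]
          MvPolynomial.homogeneousSubmodule (Fin 3) k 2))
    (hΦ : ∀ ℓ₁ ℓ₂ w : MvPolynomial.homogeneousSubmodule (Fin 3) k 1,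
      Φ (linMul ℓ₁ ℓ₂ ⊗ₜ[k] w) = ℓ₁ ⊗ₜ[k] linMul ℓ₂ w + ℓ₂ ⊗ₜ[k] linMul ℓ₁ w)

include hΦ in
lemma Phi_A (u : Fin 6 → MvPolynomial.homogeneousSubmodule (Fin 3) k 1) :
    Φ (A k u) = B k (fun i => ∑ j, linMul (hm k i j) (u j)) := by
  rw [A_apply, map_sum, B_apply]
  rw [Finset.sum_congr rfl fun j _ => Phi_f Φ hΦ j (u j)]
  rw [Finset.sum_comm]
  exact Finset.sum_congr rfl fun i _ => by rw [tmul_sum]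

include hΦ in
lemma Phi_surj [CharZero k] : Function.Surjective Φ := by
  rw [← LinearMap.range_eq_top, eq_top_iff, ← Module.Basis.span_eq ((b1 k).tensorProduct (b2 k)),
    Submodule.span_le]
  rintro x ⟨⟨i, j⟩, rfl⟩
  rw [Module.Basis.tensorProduct_apply, b1_apply, b2_apply]
  set a := (pair j).1
  set b := (pair j).2
  set t0 := linMul (e k i) (e k a) ⊗ₜ[k] e k b + linMul (e k i) (e k b) ⊗ₜ[k] e k a
    - linMul (e k a) (e k b) ⊗ₜ[k] e k i with ht0
  have hcalc : Φ t0 = (2 : k) • (e k i ⊗ₜ[k] f k j) := by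
    rw [ht0, map_sub, map_add, hΦ, hΦ, hΦ]
    rw [linMul_comm k (e k b) (e k a), linMul_comm k (e k b) (e k i),
      linMul_comm k (e k a) (e k i)]
    rw [two_smul]
    have : f k j = linMul (e k a) (e k b) := rfl
    rw [this]
    abel
  refine ⟨(2 : k)⁻¹ • t0, ?_⟩
  rw [map_smul, hcalc, smul_smul, inv_mul_cancel₀ (two_ne_zero), one_smul]

include hΦ in
lemma Phi_bij [CharZero k] : Function.Bijective Φ := by
  have hsurj := Phi_surj Φ hΦ
  refine ⟨?_, hsurj⟩
  have hrank : Module.finrank k (MvPolynomial.homogeneousSubmodule (Fin 3) k 2 ⊗[k]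
      MvPolynomial.homogeneousSubmodule (Fin 3) k 1) =
      Module.finrank k (MvPolynomial.homogeneousSubmodule (Fin 3) k 1 ⊗[k]
      MvPolynomial.homogeneousSubmodule (Fin 3) k 2) := by
    rw [Module.finrank_tensorProduct, Module.finrank_tensorProduct, finrank1, finrank2,
      mul_comm]
  exact (LinearMap.injective_iff_surjective_of_finrank_eq_finrank (V := MvPolynomial.homogeneousSubmodule (Fin 3) k 2 ⊗[k]
        MvPolynomial.homogeneousSubmodule (Fin 3) k 1) (V₂ := MvPolynomial.homogeneousSubmodule (Fin 3) k 1 ⊗[k]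
        MvPolynomial.homogeneousSubmodule (Fin 3) k 2) (f := Φ) hrank).2 hsurj

end Phi2

end Stmt11

/-- For `S = k[x₀,x₁,x₂]` over a field `k` of characteristic 0, the
`k`-linear map `Φ : S₂ ⊗ S₁ → S₁ ⊗ S₂` determined by `Φ(ℓ₁ℓ₂ ⊗ w) = ℓ₁ ⊗ ℓ₂w + ℓ₂ ⊗ ℓ₁w`
for linear forms `ℓ₁, ℓ₂, w` is surjective, hence (both sides having dimension 18)
bijective.  In particular there is a `3 × 6` matrix of linear forms in three variables for
which the induced `k`-linear map `(S₁)⁶ → (S₂)³` is bijective. -/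
theorem stmt_11 {k : Type*} [Field k] [CharZero k]
    (Φ : (MvPolynomial.homogeneousSubmodule (Fin 3) k 2 ⊗[k]
          MvPolynomial.homogeneousSubmodule (Fin 3) k 1) →ₗ[k]
         (MvPolynomial.homogeneousSubmodule (Fin 3) k 1 ⊗[k]
          MvPolynomial.homogeneousSubmodule (Fin 3) k 2))
    (hΦ : ∀ ℓ₁ ℓ₂ w : MvPolynomial.homogeneousSubmodule (Fin 3) k 1,
      Φ (linMul ℓ₁ ℓ₂ ⊗ₜ[k] w) = ℓ₁ ⊗ₜ[k] linMul ℓ₂ w + ℓ₂ ⊗ₜ[k] linMul ℓ₁ w) :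
    Function.Bijective Φ ∧
    ∃ h : Fin 3 → Fin 6 → MvPolynomial (Fin 3) k,
      (∀ i j, (h i j).IsHomogeneous 1) ∧
      (∀ ℓ ℓ' : Fin 6 → MvPolynomial (Fin 3) k,
        (∀ j, (ℓ j).IsHomogeneous 1) → (∀ j, (ℓ' j).IsHomogeneous 1) →
        (∀ i, ∑ j, h i j * ℓ j = ∑ j, h i j * ℓ' j) → ℓ = ℓ') ∧
      (∀ q : Fin 3 → MvPolynomial (Fin 3) k, (∀ i, (q i).IsHomogeneous 2) →
        ∃ ℓ : Fin 6 → MvPolynomial (Fin 3) k,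
          (∀ j, (ℓ j).IsHomogeneous 1) ∧ ∀ i, ∑ j, h i j * ℓ j = q i) := by
  classical
  have hbij := Stmt11.Phi_bij Φ hΦ
  have coe_sum : ∀ (i : Fin 3) (m : Fin 6 → MvPolynomial.homogeneousSubmodule (Fin 3) k 1),
      ((∑ j, linMul (Stmt11.hm k i j) (m j) :
          MvPolynomial.homogeneousSubmodule (Fin 3) k 2) : MvPolynomial (Fin 3) k)
        = ∑ j, Stmt11.hpoly k i j * (m j : MvPolynomial (Fin 3) k) := by
    intro i m
    rw [Submodule.coe_sum]
    exact Finset.sum_congr rfl fun j _ => rfl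
  refine ⟨hbij, Stmt11.hpoly k, fun i j => Stmt11.hpoly_hom k i j, ?_, ?_⟩
  · intro ℓ ℓ' hℓ hℓ' hsum
    set u : Fin 6 → MvPolynomial.homogeneousSubmodule (Fin 3) k 1 :=
      fun j => ⟨ℓ j, (mem_homogeneousSubmodule 1 _).2 (hℓ j)⟩ with hu
    set u' : Fin 6 → MvPolynomial.homogeneousSubmodule (Fin 3) k 1 :=
      fun j => ⟨ℓ' j, (mem_homogeneousSubmodule 1 _).2 (hℓ' j)⟩ with hu'
    have hval : (fun i => ∑ j, linMul (Stmt11.hm k i j) (u j))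
        = (fun i => ∑ j, linMul (Stmt11.hm k i j) (u' j)) := by
      funext i
      apply Subtype.ext
      rw [coe_sum, coe_sum]
      exact hsum i
    have heq : Φ (Stmt11.A k u) = Φ (Stmt11.A k u') := by
      rw [Stmt11.Phi_A Φ hΦ, Stmt11.Phi_A Φ hΦ, hval]
    have huu : u = u' := Stmt11.A_inj k (hbij.1 heq)
    funext j
    exact congrArg Subtype.val (congrFun huu j)
  · intro q hq
    set qv : Fin 3 → MvPolynomial.homogeneousSubmodule (Fin 3) k 2 :=
      fun i => ⟨q i, (mem_homogeneousSubmodule 2 _).2 (hq i)⟩ with hqv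
    obtain ⟨t, ht⟩ := hbij.2 (Stmt11.B k qv)
    obtain ⟨u, rfl⟩ := Stmt11.A_surj k t
    refine ⟨fun j => (u j : MvPolynomial (Fin 3) k),
      fun j => (mem_homogeneousSubmodule 1 _).1 (u j).2, ?_⟩
    intro i
    rw [Stmt11.Phi_A Φ hΦ] at ht
    have hfun := Stmt11.B_inj k ht
    have hi := congrArg Subtype.val (congrFun hfun i)
    rw [coe_sum] at hi
    exact hi
end

section
/- Let U₁, U₂, U₃ be 2-dimensional linear subspaces of k⁴ with Uᵢ ∩ Uⱼ = 0 for i ≠ j (three mutually disjoint lines L₁, L₂, L₃ in ℙ³), and let W be a 2-dimensional linear subspace of k⁴ with W ∩ Uᵢ ≠ 0 for i = 1, 2, 3 (a line meeting each of L₁, L₂, L₃, i.e., a 3-secant of L₁ ∪ L₂ ∪ L₃). Then every homogeneous quadratic form in k[x₀,…,x₃] vanishing on U₁ ∪ U₂ ∪ U₃ also vanishes on W; in other words, every 3-secant line of three mutually disjoint lines is contained in every quadric surface containing the three lines. -/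
open MvPolynomial

lemma binary_quad {K : Type*} [Field K] (P : MvPolynomial (Fin 2) K) (hP : P.IsHomogeneous 2)
    (h10 : eval ![1,0] P = 0) (h01 : eval ![0,1] P = 0)
    {a b : K} (ha : a ≠ 0) (hb : b ≠ 0) (hab : eval ![a,b] P = 0) :
    ∀ v : Fin 2 → K, eval v P = 0 := by
  set m20 : Fin 2 →₀ ℕ := Finsupp.single 0 2 with hm20
  set m11 : Fin 2 →₀ ℕ := Finsupp.single 0 1 + Finsupp.single 1 1 with hm11
  set m02 : Fin 2 →₀ ℕ := Finsupp.single 1 2 with hm02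
  have hdecomp : ∀ d : Fin 2 →₀ ℕ, d = Finsupp.single 0 (d 0) + Finsupp.single 1 (d 1) := by
    intro d; ext i; fin_cases i <;> simp [Finsupp.single_apply]
  have hsub : P.support ⊆ {m20, m11, m02} := by
    intro d hd
    rw [mem_support_iff] at hd
    have hw := hP hd
    rw [Finsupp.weight_apply, Finsupp.sum_fintype] at hw
    · rw [Fin.sum_univ_two] at hw
      simp only [Pi.one_apply, smul_eq_mul, mul_one] at hw
      simp only [Finset.mem_insert, Finset.mem_singleton]
      have : d 0 = 0 ∧ d 1 = 2 ∨ d 0 = 1 ∧ d 1 = 1 ∨ d 0 = 2 ∧ d 1 = 0 := by omega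
      rcases this with ⟨h0,h1⟩|⟨h0,h1⟩|⟨h0,h1⟩
      · right; right; rw [hdecomp d, h0, h1]; simp [hm02]
      · right; left; rw [hdecomp d, h0, h1, hm11]
      · left; rw [hdecomp d, h0, h1]; simp [hm20]
    · intro i; simp
  have hne1 : m20 ≠ m11 := by
    intro h; have := DFunLike.congr_fun h 1; simp [hm20, hm11, Finsupp.single_apply] at this
  have hne2 : m20 ≠ m02 := by
    intro h; have := DFunLike.congr_fun h 0; simp [hm20, hm02, Finsupp.single_apply] at this
  have hne3 : m11 ≠ m02 := by
    intro h; have := DFunLike.congr_fun h 0; simp [hm11, hm02, Finsupp.single_apply] at this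
  have key : ∀ v : Fin 2 → K, eval v P =
      coeff m20 P * v 0 ^ 2 + coeff m11 P * (v 0 * v 1) + coeff m02 P * v 1 ^ 2 := by
    intro v
    rw [eval_eq']
    rw [Finset.sum_subset hsub (by
      intro d _ hd
      rw [mem_support_iff, not_not] at hd
      simp [hd])]
    rw [Finset.sum_insert (by simp [hne1, hne2]), Finset.sum_insert (by simp [hne3]),
      Finset.sum_singleton]
    simp [hm20, hm11, hm02, Fin.prod_univ_two, Finsupp.single_apply]
    ring
  have e10 := key ![1,0]; rw [h10] at e10
  have e01 := key ![0,1]; rw [h01] at e01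
  simp at e10 e01
  have eab := key ![a,b]; rw [hab] at eab
  simp [← e10, ← e01] at eab
  rcases eab with h | h | h
  · intro v; rw [key v, ← e10, ← e01, h]; ring
  · exact absurd h ha
  · exact absurd h hb



/-- Let `L₁, L₂, L₃` be mutually disjoint lines in `ℙ³`, given by
2-dimensional subspaces `U₁, U₂, U₃ ⊆ k⁴` intersecting pairwise in `0`, and let `W ⊆ k⁴`
be a 2-dimensional subspace with `W ∩ Uᵢ ≠ 0` for each `i` (a 3-secant line of
`L₁ ∪ L₂ ∪ L₃`).  Then every quadratic form vanishing on `U₁ ∪ U₂ ∪ U₃` also vanishes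
on `W`: every 3-secant of three mutually disjoint lines lies on every quadric surface
containing the three lines. -/
theorem stmt_13 {k : Type*} [Field k] [IsAlgClosed k] [CharZero k]
    (U : Fin 3 → Submodule k (Fin 4 → k))
    (hUrank : ∀ i, Module.finrank k (U i) = 2)
    (hUdisj : ∀ i j, i ≠ j → U i ⊓ U j = ⊥)
    (W : Submodule k (Fin 4 → k))
    (hWrank : Module.finrank k W = 2)
    (hsec : ∀ i, W ⊓ U i ≠ ⊥)
    (q : MvPolynomial (Fin 4) k) (hq : q.IsHomogeneous 2)
    (hvan : ∀ i, ∀ v ∈ U i, MvPolynomial.eval v q = 0) :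
    ∀ w ∈ W, MvPolynomial.eval w q = 0 := by
  obtain ⟨w₁, hw₁, hw₁0⟩ := Submodule.exists_mem_ne_zero_of_ne_bot (hsec 0)
  obtain ⟨w₂, hw₂, hw₂0⟩ := Submodule.exists_mem_ne_zero_of_ne_bot (hsec 1)
  obtain ⟨w₃, hw₃, hw₃0⟩ := Submodule.exists_mem_ne_zero_of_ne_bot (hsec 2)
  rw [Submodule.mem_inf] at hw₁ hw₂ hw₃
  -- linear independence of w₁, w₂
  have hli : LinearIndependent k ![w₁, w₂] := by
    rw [LinearIndependent.pair_iff]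
    intro s t hst
    have h1 : s • w₁ ∈ U 0 ⊓ U 1 := by
      refine ⟨Submodule.smul_mem _ _ hw₁.2, ?_⟩
      have : s • w₁ = -(t • w₂) := by linear_combination (norm := module) hst
      rw [this]
      exact Submodule.neg_mem _ (Submodule.smul_mem _ _ hw₂.2)
    rw [hUdisj 0 1 (by decide), Submodule.mem_bot, smul_eq_zero] at h1
    have hs : s = 0 := h1.resolve_right hw₁0
    constructor
    · exact hs
    · subst hs
      simp only [zero_smul, zero_add] at hst
      rcases smul_eq_zero.mp hst with h | h
      · exact h
      · exact absurd h hw₂0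
  -- span {w₁, w₂} = W
  have hspan : Submodule.span k {w₁, w₂} = W := by
    apply Submodule.eq_of_le_of_finrank_le
    · rw [Submodule.span_le]
      rintro x (rfl | rfl)
      · exact hw₁.1
      · exact hw₂.1
    · rw [hWrank]
      have := finrank_span_eq_card hli
      rw [show Set.range ![w₁, w₂] = {w₁, w₂} by
        simp [Matrix.range_cons, Matrix.range_empty, Set.pair_comm]] at this
      rw [this]
      simp
  -- w₃ = a • w₁ + b • w₂
  obtain ⟨a, b, hab⟩ := Submodule.mem_span_pair.mp (hspan ▸ hw₃.1)
  have ha : a ≠ 0 := by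
    rintro rfl
    simp only [zero_smul, zero_add] at hab
    have : w₃ ∈ U 1 ⊓ U 2 := ⟨hab ▸ Submodule.smul_mem _ _ hw₂.2, hw₃.2⟩
    rw [hUdisj 1 2 (by decide), Submodule.mem_bot] at this
    exact hw₃0 this
  have hb : b ≠ 0 := by
    rintro rfl
    simp only [zero_smul, add_zero] at hab
    have : w₃ ∈ U 0 ⊓ U 2 := ⟨hab ▸ Submodule.smul_mem _ _ hw₁.2, hw₃.2⟩
    rw [hUdisj 0 2 (by decide), Submodule.mem_bot] at this
    exact hw₃0 this
  -- the restricted binary quadratic form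
  set g : Fin 4 → MvPolynomial (Fin 2) k := fun i => C (w₁ i) * X 0 + C (w₂ i) * X 1 with hg
  set P : MvPolynomial (Fin 2) k := aeval g q with hPdef
  have hP : P.IsHomogeneous 2 := by
    have := hq.aeval g (fun i =>
      ((isHomogeneous_X _ _).C_mul _).add ((isHomogeneous_X _ _).C_mul _))
    simpa [hPdef] using this
  have hbridge : ∀ v : Fin 2 → k, eval v P = eval (v 0 • w₁ + v 1 • w₂) q := by
    intro v
    rw [hPdef, aeval_def, algebraMap_eq]
    have : eval v (eval₂ C g q) = eval₂ (RingHom.id k) (fun t => eval₂ (RingHom.id k) v (g t)) q := by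
      rw [eval₂_assoc]
      rfl
    rw [this]
    congr 1
    funext t
    simp [hg, eval₂_add, eval₂_mul]
    ring
  have h10 : eval ![(1:k),0] P = 0 := by
    rw [hbridge, show (![(1:k),0] 0) • w₁ + (![(1:k),0] 1) • w₂ = w₁ by simp]
    exact hvan 0 w₁ hw₁.2
  have h01 : eval ![(0:k),1] P = 0 := by
    rw [hbridge, show (![(0:k),1] 0) • w₁ + (![(0:k),1] 1) • w₂ = w₂ by simp]
    exact hvan 1 w₂ hw₂.2
  have hab3 : eval ![a,b] P = 0 := by
    rw [hbridge, show (![a,b] 0) • w₁ + (![a,b] 1) • w₂ = w₃ by simpa using hab]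
    exact hvan 2 w₃ hw₃.2
  intro w hw
  obtain ⟨s, t, hst⟩ := Submodule.mem_span_pair.mp (hspan ▸ hw)
  have := binary_quad P hP h10 h01 ha hb hab3 ![s, t]
  rw [hbridge] at this
  simpa [hst] using this
end
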